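/- arXiv:1509.04880 — 5 statements merged into one kernel-verified Lean document; each statement's English description precedes it below -/
import Mathlib

section
/- For every positive integer w, the graph H_w, consisting of w disjoint cliques Q_1,…,Q_w each on w vertices labeled (i,1),…,(i,w), together with edges {(i,j),(j,i)} for all 1 ≤ i < j ≤ w, has tree-cut width at most w + 1. -/
open scoped Classical

noncomputable section

/-- A multigraph on vertex type `V`: a set of vertices together with a multiset of
(undirected, loopless) edges, parallel edges being allowed. -/
structure MGraph (V : Type) where
  verts : Set V
  edges : Multiset (Sym2 V)

namespace MGraph

variable {V : Type}

/-- The degree of a vertex: the number of incident edges, with multiplicity. -/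
def degree (G : MGraph V) (x : V) : ℕ :=
  (G.edges.filter (fun e => x ∈ e)).card

/-- The set of neighbours of a vertex. -/
def nbrSet (G : MGraph V) (x : V) : Set V :=
  {y | y ≠ x ∧ s(x, y) ∈ G.edges}

/-- `δ_G(A,B)`: the multiset of edges of `G` with one endpoint in `A` and the other in `B`. -/
def cut (G : MGraph V) (A B : Set V) : Multiset (Sym2 V) :=
  G.edges.filter (fun e => ∃ a ∈ A, ∃ b ∈ B, e = s(a, b))

/-- Adjacency in a multigraph. -/
def Adj (G : MGraph V) (x y : V) : Prop := x ≠ y ∧ s(x, y) ∈ G.edges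

/-- Connectivity of a multigraph. -/
def Connected (G : MGraph V) : Prop :=
  G.verts.Nonempty ∧ ∀ x ∈ G.verts, ∀ y ∈ G.verts, Relation.ReflTransGen G.Adj x y

/-- Deleting a (multi)set of edges from a multigraph. -/
def deleteEdges (G : MGraph V) (F : Multiset (Sym2 V)) : MGraph V :=
  ⟨G.verts, G.edges - F⟩

/-- A multigraph is 3-edge-connected if it is connected and remains connected after
removal of any set of at most 2 edges. -/
def ThreeEdgeConnected (G : MGraph V) : Prop :=
  G.Connected ∧ ∀ F : Multiset (Sym2 V), F ≤ G.edges → Multiset.card F ≤ 2 →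
    (G.deleteEdges F).Connected

/-- The induced sub-multigraph on a set of vertices. -/
def induce (G : MGraph V) (S : Set V) : MGraph V :=
  ⟨G.verts ∩ S, G.edges.filter (fun e => ∀ v ∈ e, v ∈ S)⟩

/-- `∂_G(S)`: the vertices of `S` having a neighbour outside of `S`. -/
def boundary (G : MGraph V) (S : Set V) : Set V :=
  {x | x ∈ S ∧ ∃ u, u ∈ G.verts ∧ u ∉ S ∧ s(x, u) ∈ G.edges}

/-- `|δ_G({x}, V(G)∖S)|`: the number of edges from `x` to the outside of `S`. -/
def bWeight (G : MGraph V) (S : Set V) (x : V) : ℕ :=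
  (G.edges.filter (fun e => ∃ u, u ∈ G.verts ∧ u ∉ S ∧ e = s(x, u))).card

/-- Dissolving step used in the definition of the 3-center of `(G, X)`: a vertex `x ∉ X`
of degree 2 with exactly two (distinct) neighbours `y, z` is removed and the edge `yz`
is added (increasing its multiplicity if it is already present). -/
def DissolveStep (X : Set V) (G G' : MGraph V) : Prop :=
  ∃ x y z, x ∉ X ∧ x ∈ G.verts ∧ y ≠ z ∧ x ≠ y ∧ x ≠ z ∧
    G.edges.filter (fun e => x ∈ e) = {s(x, y), s(x, z)} ∧
    G' = ⟨G.verts \ {x}, G.edges.filter (fun e => x ∉ e) + {s(y, z)}⟩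

/-- Deletion step used in the definition of the 3-center of `(G, X)`: a vertex `x ∉ X`
of degree at most 2 with at most one neighbour is removed. -/
def DeleteStep (X : Set V) (G G' : MGraph V) : Prop :=
  ∃ x, x ∉ X ∧ x ∈ G.verts ∧ G.degree x ≤ 2 ∧ (G.nbrSet x).Subsingleton ∧
    G' = ⟨G.verts \ {x}, G.edges.filter (fun e => x ∉ e)⟩

def CenterStep (X : Set V) (G G' : MGraph V) : Prop :=
  DissolveStep X G G' ∨ DeleteStep X G G'

/-- `H` is a 3-center of `(G, X)` if it is obtained from `G` by repeatedly applying
dissolve/delete steps until none applies. -/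
def IsThreeCenter (X : Set V) (G H : MGraph V) : Prop :=
  Relation.ReflTransGen (CenterStep X) G H ∧ ∀ H', ¬ CenterStep X H H'

/-- `(T, X)` is a tree-cut decomposition of `G`: `T` is a tree and the bags `X t` are
pairwise disjoint with union `V(G)`. -/
def IsTCD {ι : Type} (G : MGraph V) (T : SimpleGraph ι) (X : ι → Set V) : Prop :=
  T.IsTree ∧ (Pairwise fun t t' => Disjoint (X t) (X t')) ∧ (⋃ t, X t) = G.verts

/-- Given a tree edge `{a,b}` of `T`, the union of the bags over the component of
`T - {a,b}` containing `a`. -/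
def edgeSide {ι : Type} (T : SimpleGraph ι) (X : ι → Set V) (a b : ι) : Set V :=
  ⋃ t ∈ {t | (T.deleteEdges {s(a, b)}).Reachable a t}, X t

/-- The adhesion `δ^T({a,b})` of a tree edge of a tree-cut decomposition. -/
def adhesion (G : MGraph V) {ι : Type} (T : SimpleGraph ι) (X : ι → Set V) (a b : ι) :
    Multiset (Sym2 V) :=
  G.cut (edgeSide T X a b) (edgeSide T X b a)

/-- `a` and `b` are connected in `T - t`. -/
def ReachAvoid {ι : Type} (T : SimpleGraph ι) (t a b : ι) : Prop :=
  ∃ (ha : a ∈ ({t}ᶜ : Set ι)) (hb : b ∈ ({t}ᶜ : Set ι)),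
    (T.induce ({t}ᶜ : Set ι)).Reachable ⟨a, ha⟩ ⟨b, hb⟩

/-- The neighbour of `t` indexing the component of `T - t` whose bags contain `v`. -/
def compOf {ι : Type} (T : SimpleGraph ι) (X : ι → Set V) (t : ι) (v : V) : ι :=
  if h : ∃ s, T.Adj t s ∧ ∃ t', v ∈ X t' ∧ ReachAvoid T t s t' then h.choose else t

/-- The identification map used in the definition of the torso at `t`. -/
def torsoMap {ι : Type} (T : SimpleGraph ι) (X : ι → Set V) (t : ι) (v : V) : V ⊕ ι :=
  if v ∈ X t then Sum.inl v else Sum.inr (compOf T X t v)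

/-- The torso of `G` at node `t` of the tree-cut decomposition `(T, X)`: each non-empty
union of bags over a component of `T - t` is identified to a single vertex (components
are indexed by the corresponding neighbour of `t`); parallel edges are kept, loops
are discarded. -/
def torso {ι : Type} (G : MGraph V) (T : SimpleGraph ι) (X : ι → Set V) (t : ι) :
    MGraph (V ⊕ ι) :=
  ⟨Sum.inl '' (X t) ∪
     Sum.inr '' {s | T.Adj t s ∧ ∃ t' v, v ∈ X t' ∧ ReachAvoid T t s t'},
   (G.edges.map (Sym2.map (torsoMap T X t))).filter (fun e => ¬ e.IsDiag)⟩

/-- The width of the tree-cut decomposition `(T, X)` of `G` is at most `w`: all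
adhesions have at most `w` edges and all 3-centers of torsos have at most `w` vertices. -/
def WidthLE {ι : Type} (G : MGraph V) (T : SimpleGraph ι) (X : ι → Set V) (w : ℕ) : Prop :=
  (∀ a b, T.Adj a b → Multiset.card (adhesion G T X a b) ≤ w) ∧
  ∀ t H, IsThreeCenter (Sum.inl '' (X t)) (torso G T X t) H → H.verts.ncard ≤ w

/-- `G` has a tree-cut decomposition of width at most `w`. -/
def tcwLE (G : MGraph V) (w : ℕ) : Prop :=
  ∃ (ι : Type) (_ : Finite ι) (T : SimpleGraph ι) (X : ι → Set V),
    IsTCD G T X ∧ WidthLE G T X w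

/-- The tree-cut width of a multigraph. -/
def tcw (G : MGraph V) : ℕ := sInf {w | tcwLE G w}

/-- A leaf of a tree: a node with exactly one neighbour. -/
def IsLeaf {ι : Type} (T : SimpleGraph ι) (t : ι) : Prop := ∃! s, T.Adj t s

/-- The internal width of `(T, X)` is at most `w`: all adhesions are at most `w` and the
3-center torso sizes of all *non-leaf* nodes are at most `w`. -/
def InWidthLE {ι : Type} (G : MGraph V) (T : SimpleGraph ι) (X : ι → Set V) (w : ℕ) : Prop :=
  (∀ a b, T.Adj a b → Multiset.card (adhesion G T X a b) ≤ w) ∧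
  ∀ t, ¬ IsLeaf T t →
    ∀ H, IsThreeCenter (Sum.inl '' (X t)) (torso G T X t) H → H.verts.ncard ≤ w

/-- A tree-cut decomposition is non-trivial if at least two bags are non-empty. -/
def NonTrivial {ι : Type} (X : ι → Set V) : Prop :=
  ∃ t t', t ≠ t' ∧ (X t).Nonempty ∧ (X t').Nonempty

/-- Identifying the vertex set `S` of `G` into the single vertex `v₀ ∈ S`:
edges inside `S` are deleted (loops discarded), parallel edges are kept. -/
def collapse (G : MGraph V) (S : Set V) (v₀ : V) : MGraph V :=
  ⟨(G.verts \ S) ∪ {v₀},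
   (G.edges.map (Sym2.map (fun x => if x ∈ S then v₀ else x))).filter (fun e => ¬ e.IsDiag)⟩

/-- One step of taking an immersion: deleting an edge, deleting a vertex, or lifting a
pair of edges `{x,v}, {v,y}` to the single edge `{x,y}`. -/
def ImmStep (G G' : MGraph V) : Prop :=
  (∃ e ∈ G.edges, G' = ⟨G.verts, G.edges.erase e⟩) ∨
  (∃ v ∈ G.verts, G' = ⟨G.verts \ {v}, G.edges.filter (fun e => v ∉ e)⟩) ∨
  (∃ x v y, x ≠ v ∧ y ≠ v ∧ x ≠ y ∧ s(x, v) ∈ G.edges ∧ s(v, y) ∈ G.edges.erase s(x, v) ∧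
    G' = ⟨G.verts, s(x, y) ::ₘ ((G.edges.erase s(x, v)).erase s(v, y))⟩)

/-- `H` is an immersion of `G`. -/
def IsImmersion (H G : MGraph V) : Prop := Relation.ReflTransGen ImmStep G H

end MGraph

/-- The multigraph associated to a simple graph. -/
def SimpleGraph.toMGraph {α : Type} [Fintype α] (G : SimpleGraph α) : MGraph α :=
  ⟨Set.univ, (Set.toFinite G.edgeSet).toFinset.val⟩

/-- The star with `ℓ` leaves: center `none`, leaves `some i`. -/
def starGraph (ℓ : ℕ) : SimpleGraph (Option (Fin ℓ)) :=
  SimpleGraph.fromRel (fun a _ => a = none)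

/-- The graph `H_w`: `w` disjoint cliques `Q_i = {(i,j) : j}` of size `w`, together with
the cross edges `{(i,j),(j,i)}` for `i ≠ j`. -/
def Hw (w : ℕ) : SimpleGraph (Fin w × Fin w) :=
  SimpleGraph.fromRel (fun p q => p.1 = q.1 ∨ (q.1 = p.2 ∧ q.2 = p.1))

/-- Two vertex sets touch in `G`: they intersect or are joined by an edge. -/
def Touch {α : Type} (G : SimpleGraph α) (A B : Set α) : Prop :=
  (A ∩ B).Nonempty ∨ ∃ a ∈ A, ∃ b ∈ B, G.Adj a b

/-- A bramble: a collection of (vertex sets of) connected subgraphs pairwise touching. -/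
def IsBramble {α : Type} (G : SimpleGraph α) (ℬ : Set (Set α)) : Prop :=
  (∀ A ∈ ℬ, (G.induce A).Connected) ∧ ∀ A ∈ ℬ, ∀ B ∈ ℬ, Touch G A B

/-- `B(i,Z) = {(i,j) : j ∈ Z} ∪ {(j,i) : j ∈ Z}`. -/
def Bset (w : ℕ) (i : Fin w) (Z : Finset (Fin w)) : Set (Fin w × Fin w) :=
  {p | (p.1 = i ∧ p.2 ∈ Z) ∨ (p.2 = i ∧ p.1 ∈ Z)}

/-- The bramble `B_w = {H_w[B(i,Z)] : i ∈ [w], Z ⊆ [w]∖{i}, |Z| = w/2}`. -/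
def Bfam (w : ℕ) : Set (Set (Fin w × Fin w)) :=
  {A | ∃ (i : Fin w) (Z : Finset (Fin w)), i ∉ Z ∧ Z.card = w / 2 ∧ A = Bset w i Z}

/-- `(T, Y)` is a tree decomposition of the simple graph `G`. -/
def IsTreeDecomp {α ι : Type} (G : SimpleGraph α) (T : SimpleGraph ι) (Y : ι → Set α) : Prop :=
  T.IsTree ∧ (∀ v, ∃ x, v ∈ Y x) ∧
  (∀ u v, G.Adj u v → ∃ x, u ∈ Y x ∧ v ∈ Y x) ∧
  (∀ v, (T.induce {x | v ∈ Y x}).Connected)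

/-- `G` has treewidth at most `k`. -/
def twLE {α : Type} (G : SimpleGraph α) (k : ℕ) : Prop :=
  ∃ (ι : Type) (_ : Finite ι) (T : SimpleGraph ι) (Y : ι → Set α),
    IsTreeDecomp G T Y ∧ ∀ x, (Y x).ncard ≤ k + 1

end
noncomputable section
open scoped Classical

namespace MGraph

variable {V : Type}

/-- The weight function `γ'` of Lemma 4: `γ'(v) = |δ_G({v}, V(G)∖S)|` for `v ∈ S`,
and `0` otherwise. -/
def gammaExt (G : MGraph V) (S : Set V) (v : V) : ℕ :=
  if v ∈ S then G.bWeight S v else 0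

/-- `γ'(T_b)` where `T_b` is the component of `T - {a,b}` containing `b`. -/
def sideWeight (G : MGraph V) {ι : Type} (T : SimpleGraph ι) (X : ι → Set V)
    (S : Set V) (a b : ι) : ℕ :=
  ∑ᶠ t ∈ {t | (T.deleteEdges {s(a, b)}).Reachable b t}, ∑ᶠ v ∈ X t, G.gammaExt S v

/-- The edge `{x,y}` of `T` is oriented from `x` to `y` by Rule 1 (`γ'(T_y) > w`) or by
Rule 2 (`S` avoids all the bags on the `x`-side). -/
def ruleOrient (G : MGraph V) {ι : Type} (T : SimpleGraph ι) (X : ι → Set V)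
    (S : Set V) (w : ℕ) (x y : ι) : Prop :=
  w < G.sideWeight T X S x y ∨ S ∩ edgeSide T X x y = ∅

end MGraph

/-- The tree obtained from `T` by attaching `ℓ` new leaves to the node `t`
(`t` plays the role of the center of the star replacing the former leaf `t`). -/
def refineTree {ι : Type} (T : SimpleGraph ι) (t : ι) (ℓ : ℕ) : SimpleGraph (ι ⊕ Fin ℓ) :=
  SimpleGraph.fromRel (fun a b =>
    (∃ i j, a = Sum.inl i ∧ b = Sum.inl j ∧ T.Adj i j) ∨
    (a = Sum.inl t ∧ ∃ i, b = Sum.inr i))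

/-- The bags of the refined decomposition: the bag of the former leaf `t` is replaced by
the central bag `Xs none` of the star decomposition, the new leaves get the leaf bags. -/
def refineBags {V ι : Type} (X : ι → Set V) (t : ι) {ℓ : ℕ}
    (Xs : Option (Fin ℓ) → Set V) : ι ⊕ Fin ℓ → Set V :=
  fun s => Sum.rec (fun a => if a = t then Xs none else X a) (fun i => Xs (some i)) s

/-- `w = n³/2 + k`, the target width in the Min Bisection reduction. -/
def bisectW (n k : ℕ) : ℕ := n ^ 3 / 2 + k

/-- The vertex type of the graph `G'` of the Min Bisection reduction:
`V = Fin n`, `Q = Fin (w-2)`, and a set `C_{x,y}` of `w+1` vertices for each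
(unordered) pair `x < y` of vertices of `Q`. -/
abbrev BisV (n w : ℕ) : Type :=
  Fin n ⊕ (Fin (w - 2) ⊕ (({p : Fin (w - 2) × Fin (w - 2) // p.1 < p.2}) × Fin (w + 1)))

/-- The (one-directional) edge relation of `G'`: `V` induces a copy of `G`; each vertex
`a ∈ V` is adjacent to the `n²` vertices `f a ⊆ Q`; every vertex of `C_{x,y}` is
adjacent to both `x` and `y`. -/
def bisectR {n : ℕ} (G : SimpleGraph (Fin n)) (w : ℕ) (f : Fin n → Finset (Fin (w - 2))) :
    BisV n w → BisV n w → Prop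
  | Sum.inl a, Sum.inl b => G.Adj a b
  | Sum.inl a, Sum.inr (Sum.inl q) => q ∈ f a
  | Sum.inr (Sum.inl q), Sum.inr (Sum.inr c) => q = c.1.1.1 ∨ q = c.1.1.2
  | _, _ => False

/-- The graph `G'` of the Min Bisection reduction. -/
def bisectG {n : ℕ} (G : SimpleGraph (Fin n)) (w : ℕ) (f : Fin n → Finset (Fin (w - 2))) :
    SimpleGraph (BisV n w) :=
  SimpleGraph.fromRel (bisectR G w f)

/-- The multiset of edges used by a walk, given as its list of vertices. -/
def walkEdges {V : Type} (l : List V) : Multiset (Sym2 V) :=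
  ↑((l.zip l.tail).map fun p => s(p.1, p.2))

end

noncomputable section
open scoped Classical
open MGraph

namespace TcwHwAux

abbrev VV (w : ℕ) := Fin w × Fin w
abbrev II (w : ℕ) := Option (Fin w)

/-- The bags: center gets the empty bag, leaf `i` gets the clique `Q_i`. -/
def bags (w : ℕ) : II w → Set (VV w)
  | none => ∅
  | some i => {p | p.1 = i}

lemma star_adj (w : ℕ) (a b : II w) :
    (starGraph w).Adj a b ↔ a ≠ b ∧ (a = none ∨ b = none) := by
  simp only [starGraph, SimpleGraph.fromRel_adj]

/-- If `some i` has no neighbours in `G'`, then only `some i` is reachable from it. -/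
lemma no_reach {w : ℕ} (i : Fin w) (G' : SimpleGraph (II w))
    (hadj : ∀ x, ¬ G'.Adj (some i) x) (x : II w)
    (h : G'.Reachable (some i) x) : x = some i := by
  obtain ⟨p⟩ := h
  cases p with
  | nil => rfl
  | cons h q => exact absurd h (hadj _)

lemma leaf_no_adj {w : ℕ} (i : Fin w) (x : II w) :
    ¬ ((starGraph w).deleteEdges {s((none : II w), some i)}).Adj (some i) x := by
  intro hx
  rw [SimpleGraph.deleteEdges_adj] at hx
  obtain ⟨hne, hc⟩ := (star_adj w _ _).1 hx.1
  have hxn : x = none := by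
    rcases hc with h1 | h1
    · exact absurd h1 (by simp)
    · exact h1
  subst hxn
  exact hx.2 (by rw [Sym2.eq_swap]; exact rfl)

lemma star_tree (w : ℕ) : (starGraph w).IsTree := by
  constructor
  · have key : ∀ c : II w, (starGraph w).Reachable c none := by
      intro c
      cases c with
      | none => exact SimpleGraph.Reachable.refl _
      | some j =>
        exact SimpleGraph.Adj.reachable ((star_adj w _ _).2 ⟨by simp, Or.inr rfl⟩)
    exact SimpleGraph.Connected.mk (fun a b => (key a).trans (key b).symm)
  · rw [SimpleGraph.isAcyclic_iff_forall_adj_isBridge]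
    intro v u h
    rw [SimpleGraph.isBridge_iff]
    show ¬ (starGraph w \ SimpleGraph.fromEdgeSet {s(v, u)}).Reachable v u
    obtain ⟨hne, hc⟩ := (star_adj w _ _).1 h
    rcases hc with rfl | rfl
    · -- v = none
      cases u with
      | none => exact absurd rfl hne
      | some i =>
        intro hr
        have : (starGraph w).deleteEdges {s((none : II w), some i)} =
            starGraph w \ SimpleGraph.fromEdgeSet {s((none : II w), some i)} := rfl
        rw [← this] at hr
        exact absurd (no_reach i _ (leaf_no_adj i) none hr.symm) (by simp)
    · -- u = none
      cases v with
      | none => exact absurd rfl hne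
      | some i =>
        intro hr
        have he : s((some i : II w), (none : II w)) = s((none : II w), some i) :=
          Sym2.eq_swap
        rw [he] at hr
        have : (starGraph w).deleteEdges {s((none : II w), some i)} =
            starGraph w \ SimpleGraph.fromEdgeSet {s((none : II w), some i)} := rfl
        rw [← this] at hr
        exact absurd (no_reach i _ (leaf_no_adj i) none hr) (by simp)

lemma edgeSide_leaf (w : ℕ) (i : Fin w) :
    edgeSide (starGraph w) (bags w) (some i) none = {p | p.1 = i} := by
  have he : s((some i : II w), (none : II w)) = s((none : II w), some i) := Sym2.eq_swap
  have hset : {t | ((starGraph w).deleteEdges {s((some i : II w), (none : II w))}).Reachable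
      (some i) t} = {some i} := by
    ext t
    simp only [Set.mem_setOf_eq, Set.mem_singleton_iff]
    constructor
    · intro h
      rw [he] at h
      exact no_reach i _ (leaf_no_adj i) t h
    · rintro rfl
      exact SimpleGraph.Reachable.refl _
  unfold edgeSide
  rw [hset]
  simp [bags]

lemma edgeSide_center (w : ℕ) (i : Fin w) :
    edgeSide (starGraph w) (bags w) none (some i) = {p | p.1 ≠ i} := by
  have hset : {t | ((starGraph w).deleteEdges {s((none : II w), some i)}).Reachable none t}
      = {t | t ≠ some i} := by
    ext t
    simp only [Set.mem_setOf_eq]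
    constructor
    · intro h hti
      subst hti
      exact absurd (no_reach i _ (leaf_no_adj i) none h.symm) (by simp)
    · intro ht
      cases t with
      | none => exact SimpleGraph.Reachable.refl _
      | some j =>
        have hij : j ≠ i := fun hh => ht (by rw [hh])
        refine SimpleGraph.Adj.reachable ?_
        rw [SimpleGraph.deleteEdges_adj]
        refine ⟨(star_adj w _ _).2 ⟨by simp, Or.inl rfl⟩, ?_⟩
        simp [Sym2.eq, Sym2.rel_iff', Prod.ext_iff, hij]
  ext p
  simp only [edgeSide, hset, Set.mem_iUnion, Set.mem_setOf_eq]
  constructor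
  · rintro ⟨t, ht, hp⟩
    cases t with
    | none => exact absurd hp (by simp [bags])
    | some j =>
      have hpj : p.1 = j := hp
      intro hpi
      exact ht (congrArg some (hpj.symm.trans hpi))
  · intro hpi
    exact ⟨some p.1, by simpa using hpi, rfl⟩

lemma cut_card_le (w : ℕ) (i : Fin w) (A B : Set (VV w))
    (h : ∀ a ∈ A, ∀ b ∈ B, (a.1 = i ∧ b.1 ≠ i) ∨ (b.1 = i ∧ a.1 ≠ i)) :
    Multiset.card ((Hw w).toMGraph.cut A B) ≤ w := by
  classical
  set f : Fin w → Sym2 (VV w) := fun j => s(((i, j) : VV w), ((j, i) : VV w)) with hf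
  have hsub : (Hw w).toMGraph.cut A B ⊆ Multiset.map f Finset.univ.val := by
    intro e he
    unfold MGraph.cut at he
    have hp := @Multiset.of_mem_filter _ _ (fun _ => Classical.propDecidable _) _ _ he
    have heF := @Multiset.mem_of_mem_filter _ _ (fun _ => Classical.propDecidable _) _ _ he
    obtain ⟨a, ha, b, hb, rfl⟩ := hp
    have hadj : (Hw w).Adj a b := by
      have : s(a, b) ∈ (Hw w).edgeSet := by
        simpa [SimpleGraph.toMGraph, Finset.mem_val, Set.Finite.mem_toFinset] using heF
      exact this
    rw [Multiset.mem_map]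
    rcases h a ha b hb with ⟨hai, hbi⟩ | ⟨hbi, hai⟩
    · rw [Hw, SimpleGraph.fromRel_adj] at hadj
      obtain ⟨hne, hc⟩ := hadj
      have hb' : b = (a.2, a.1) := by
        rcases hc with (h1 | ⟨h1, h2⟩) | (h1 | ⟨h1, h2⟩)
        · exact absurd (h1.symm.trans hai) hbi
        · exact Prod.ext h1 h2
        · exact absurd (h1.trans hai) hbi
        · exact Prod.ext h2.symm h1.symm
      have ha'' : a = (i, a.2) := Prod.ext hai rfl
      have hb'' : b = (a.2, i) := by rw [hb', hai]
      refine ⟨a.2, Finset.mem_univ_val _, ?_⟩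
      show s(((i, a.2) : VV w), ((a.2, i) : VV w)) = s(a, b)
      rw [← ha'', ← hb'']
    · rw [Hw, SimpleGraph.fromRel_adj] at hadj
      obtain ⟨hne, hc⟩ := hadj
      have ha' : a = (b.2, b.1) := by
        rcases hc with (h1 | ⟨h1, h2⟩) | (h1 | ⟨h1, h2⟩)
        · exact absurd (h1.trans hbi) hai
        · exact Prod.ext h2.symm h1.symm
        · exact absurd (h1.symm.trans hbi) hai
        · exact Prod.ext h1 h2
      have ha'' : a = (b.2, i) := by rw [ha', hbi]
      have hb'' : b = (i, b.2) := Prod.ext hbi rfl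
      refine ⟨b.2, Finset.mem_univ_val _, ?_⟩
      show s(((i, b.2) : VV w), ((b.2, i) : VV w)) = s(a, b)
      rw [← hb'', ← ha'']
      exact Sym2.eq_swap
  have hnd : ((Hw w).toMGraph.cut A B).Nodup := by
    apply Multiset.nodup_of_le (t := (Hw w).toMGraph.edges)
    · unfold MGraph.cut
      exact @Multiset.filter_le _ _ (fun _ => Classical.propDecidable _) _
    · exact (Set.toFinite (Hw w).edgeSet).toFinset.nodup
  calc Multiset.card ((Hw w).toMGraph.cut A B)
      ≤ Multiset.card (Multiset.map f Finset.univ.val) :=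
        Multiset.card_le_card ((Multiset.le_iff_subset hnd).2 hsub)
    _ = w := by simp

lemma adhesion_le (w : ℕ) (a b : II w) (hab : (starGraph w).Adj a b) :
    Multiset.card (adhesion (Hw w).toMGraph (starGraph w) (bags w) a b) ≤ w + 1 := by
  obtain ⟨hne, hc⟩ := (star_adj w a b).1 hab
  unfold adhesion
  rcases hc with rfl | rfl
  · cases b with
    | none => exact absurd rfl hne
    | some i =>
      rw [edgeSide_center, edgeSide_leaf]
      exact le_trans (cut_card_le w i _ _ (fun x hx y hy => Or.inr ⟨hy, hx⟩)) (by omega)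
  · cases a with
    | none => exact absurd rfl hne
    | some i =>
      rw [edgeSide_leaf, edgeSide_center]
      exact le_trans (cut_card_le w i _ _ (fun x hx y hy => Or.inl ⟨hx, hy⟩)) (by omega)

lemma verts_subset_of_center {V : Type} (X : Set V) {G G' : MGraph V}
    (h : CenterStep X G G') : G'.verts ⊆ G.verts := by
  rcases h with ⟨x, y, z, _, _, _, _, _, _, rfl⟩ | ⟨x, _, _, _, _, rfl⟩ <;>
    exact Set.diff_subset

lemma verts_subset_rtg {V : Type} (X : Set V) {G H : MGraph V}
    (h : Relation.ReflTransGen (CenterStep X) G H) : H.verts ⊆ G.verts := by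
  induction h with
  | refl => exact subset_rfl
  | tail _ hstep ih => exact (verts_subset_of_center _ hstep).trans ih

lemma torso_verts_le (w : ℕ) (t : II w) (H : MGraph (VV w ⊕ II w))
    (hH : IsThreeCenter (Sum.inl '' (bags w t))
      (torso (Hw w).toMGraph (starGraph w) (bags w) t) H) :
    H.verts.ncard ≤ w + 1 := by
  have hsub : H.verts ⊆ (torso (Hw w).toMGraph (starGraph w) (bags w) t).verts :=
    verts_subset_rtg _ hH.1
  cases t with
  | none =>
    have h1 : (torso (Hw w).toMGraph (starGraph w) (bags w) none).verts ⊆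
        Set.range (Sum.inr : II w → VV w ⊕ II w) := by
      intro v hv
      rcases hv with h | h
      · simp [bags] at h
      · rcases h with ⟨s, _, rfl⟩
        exact ⟨s, rfl⟩
    have h2 : (Set.range (Sum.inr : II w → VV w ⊕ II w)).ncard = w + 1 := by
      rw [← Set.image_univ, Set.ncard_image_of_injective _ Sum.inr_injective,
        Set.ncard_univ, Nat.card_eq_fintype_card]
      simp
    calc H.verts.ncard ≤ (Set.range (Sum.inr : II w → VV w ⊕ II w)).ncard :=
          Set.ncard_le_ncard (hsub.trans h1) (Set.toFinite _)
      _ = w + 1 := h2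
  | some i =>
    have h1 : (torso (Hw w).toMGraph (starGraph w) (bags w) (some i)).verts ⊆
        (Sum.inl '' {p : VV w | p.1 = i}) ∪
          (Sum.inr '' ({none} : Set (II w))) := by
      intro v hv
      rcases hv with h | h
      · exact Or.inl (by simpa [bags] using h)
      · rcases h with ⟨s, ⟨hs, _⟩, rfl⟩
        obtain ⟨_, hc⟩ := (star_adj w _ _).1 hs
        have : s = none := by
          rcases hc with h1 | h1
          · exact absurd h1 (by simp)
          · exact h1
        exact Or.inr ⟨s, by simp [this], rfl⟩
    have hQ : ({p : VV w | p.1 = i}).ncard = w := by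
      have : {p : VV w | p.1 = i} = (Prod.mk i) '' Set.univ := by
        ext p
        simp only [Set.image_univ, Set.mem_setOf_eq, Set.mem_range]
        constructor
        · intro h
          exact ⟨p.2, Prod.ext h.symm rfl⟩
        · rintro ⟨j, rfl⟩
          rfl
      rw [this, Set.ncard_image_of_injective _ (Prod.mk_right_injective i), Set.ncard_univ,
        Nat.card_eq_fintype_card, Fintype.card_fin]
    calc H.verts.ncard
        ≤ ((Sum.inl '' {p : VV w | p.1 = i}) ∪
            (Sum.inr '' ({none} : Set (II w)))).ncard :=
          Set.ncard_le_ncard (hsub.trans h1) (Set.toFinite _)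
      _ ≤ (Sum.inl '' {p : VV w | p.1 = i}).ncard +
            (Sum.inr '' ({none} : Set (II w))).ncard := Set.ncard_union_le _ _
      _ ≤ w + 1 := by
          rw [Set.ncard_image_of_injective _ Sum.inl_injective, hQ,
            Set.ncard_image_of_injective _ Sum.inr_injective, Set.ncard_singleton]

end TcwHwAux

open TcwHwAux in
theorem tcw_Hw_le (w : ℕ) (hw : 1 ≤ w) : tcw (Hw w).toMGraph ≤ w + 1 := by
  apply Nat.sInf_le
  refine ⟨II w, inferInstance, starGraph w, bags w, ⟨star_tree w, ?_, ?_⟩, ?_, ?_⟩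
  · intro t t' hne
    cases t with
    | none => simp [bags]
    | some i =>
      cases t' with
      | none => simp [bags]
      | some j =>
        have hij : i ≠ j := fun h => hne (by rw [h])
        rw [Set.disjoint_left]
        intro p hp hp'
        exact hij ((hp : p.1 = i).symm.trans (hp' : p.1 = j))
  · show (⋃ t, bags w t) = Set.univ
    ext p
    simp only [Set.mem_iUnion, Set.mem_univ, iff_true]
    exact ⟨some p.1, rfl⟩
  · exact fun a b h => adhesion_le w a b h
  · exact fun t H hH => torso_verts_le w t H hH

end
end

section
/- Let w be an even positive integer and H_w the graph on vertices {(i,j) : i,j ∈ [w]} where each Q_i = {(i,j) : j ∈ [w]} is a clique and (i,j) is adjacent to (j,i) for i ≠ j. Define the bramble B_w = { H_w[B(i,Z)] : i ∈ [w], Z ⊆ [w]∖{i}, |Z| = w/2 }, where B(i,Z) = {(i,j) : j ∈ Z} ∪ {(j,i) : j ∈ Z}. Then B_w is a bramble of H_w: every element is a connected subgraph and every two elements touch each other. -/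
open scoped Classical

noncomputable section
open scoped Classical
open MGraph

lemma hw_adj_clique {w : ℕ} (a : Fin w) {j j' : Fin w} (h : j ≠ j') :
    (Hw w).Adj (a, j) (a, j') := by
  rw [Hw, SimpleGraph.fromRel_adj]
  exact ⟨by simp [Prod.ext_iff, h], Or.inl (Or.inl rfl)⟩

lemma hw_adj_cross {w : ℕ} {i j : Fin w} (h : j ≠ i) :
    (Hw w).Adj (j, i) (i, j) := by
  rw [Hw, SimpleGraph.fromRel_adj]
  exact ⟨by simp [Prod.ext_iff, h], Or.inl (Or.inr ⟨rfl, rfl⟩)⟩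

theorem Bfam_isBramble (w : ℕ) (hw : 0 < w) (hweven : Even w) :
    IsBramble (Hw w) (Bfam w) := by
  have hw2 : 2 ≤ w := by obtain ⟨m, rfl⟩ := hweven; omega
  constructor
  · rintro A ⟨i, Z, hiZ, hcard, rfl⟩
    have hZne : Z.Nonempty := by
      rw [← Finset.card_pos, hcard]; omega
    obtain ⟨j0, hj0⟩ := hZne
    have hij0 : j0 ≠ i := fun h => hiZ (h ▸ hj0)
    have hhub : ((i, j0) : Fin w × Fin w) ∈ Bset w i Z := Or.inl ⟨rfl, hj0⟩
    rw [SimpleGraph.connected_iff]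
    refine ⟨fun u v => ?_, ⟨⟨(i, j0), hhub⟩⟩⟩
    have key : ∀ v : Bset w i Z,
        ((Hw w).induce (Bset w i Z)).Reachable v ⟨(i, j0), hhub⟩ := by
      have toh : ∀ (j : Fin w) (hj : j ∈ Z),
          ((Hw w).induce (Bset w i Z)).Reachable
            ⟨(i, j), Or.inl ⟨rfl, hj⟩⟩ ⟨(i, j0), hhub⟩ := by
        intro j hj
        by_cases hjj : j = j0
        · subst hjj; rfl
        · exact SimpleGraph.Adj.reachable (by
            show (Hw w).Adj (i, j) (i, j0)
            exact hw_adj_clique i hjj)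
      rintro ⟨⟨v1, v2⟩, hv | hv⟩
      · obtain ⟨h1, h2⟩ := hv
        subst h1
        exact toh v2 h2
      · obtain ⟨h1, h2⟩ := hv
        subst h1
        have hne : v1 ≠ v2 := fun h => hiZ (h ▸ h2)
        refine SimpleGraph.Reachable.trans (SimpleGraph.Adj.reachable
          (v := ⟨(v2, v1), Or.inl ⟨rfl, h2⟩⟩) ?_) (toh v1 h2)
        show (Hw w).Adj (v1, v2) (v2, v1)
        exact hw_adj_cross hne
    exact (key u).trans (key v).symm
  · rintro A ⟨i, Z, hiZ, hZ, rfl⟩ B ⟨i', Z', hiZ', hZ', rfl⟩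
    have hsum : Z.card + Z'.card = w := by
      obtain ⟨m, rfl⟩ := hweven; rw [hZ, hZ']; omega
    by_cases hcase : i ≠ i' ∧ i ∈ Z' ∧ i' ∈ Z
    · exact Or.inl ⟨(i, i'), Or.inl ⟨rfl, hcase.2.2⟩, Or.inr ⟨rfl, hcase.2.1⟩⟩
    · -- find a common element of Z and Z'
      have hx : ∃ x, x ∉ Z ∪ Z' := by
        push_neg at hcase
        by_cases hii : i = i'
        · exact ⟨i, by simp [hiZ, hii ▸ hiZ']⟩
        · by_cases h : i ∈ Z'
          · exact ⟨i', by simp [hiZ', hcase hii h]⟩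
          · exact ⟨i, by simp [hiZ, h]⟩
      obtain ⟨x, hx⟩ := hx
      have hsub : Z ∪ Z' ⊆ Finset.univ.erase x := fun y hy =>
        Finset.mem_erase.2 ⟨fun h => hx (h ▸ hy), Finset.mem_univ y⟩
      have hcardU : (Z ∪ Z').card ≤ w - 1 := by
        have := Finset.card_le_card hsub
        simpa [Finset.card_erase_of_mem] using this
      have hinter : (Z ∩ Z').Nonempty := by
        rw [← Finset.card_pos]
        have := Finset.card_union_add_card_inter Z Z'
        omega
      obtain ⟨j, hj⟩ := hinter
      rw [Finset.mem_inter] at hj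
      by_cases hii : i = i'
      · subst hii
        exact Or.inl ⟨(i, j), Or.inl ⟨rfl, hj.1⟩, Or.inl ⟨rfl, hj.2⟩⟩
      · refine Or.inr ⟨(j, i), Or.inr ⟨rfl, hj.1⟩, (j, i'), Or.inr ⟨rfl, hj.2⟩, ?_⟩
        exact hw_adj_clique j hii

end
end

section
/- For every even positive integer w, the treewidth of the graph H_w (w cliques Q_1,…,Q_w of size w with cross edges {(i,j),(j,i)} for i ≠ j) is at least w²/16 − 1. -/
open scoped Classical

noncomputable section
open scoped Classical
open MGraph


namespace TwProof

open SimpleGraph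

variable {ι : Type} {T : SimpleGraph ι}

def Side (T : SimpleGraph ι) (t s : ι) : Set ι :=
  {x | (T.deleteEdges {s(t, s)}).Reachable s x}

lemma bridge_not_reachable (hT : T.IsAcyclic) {t s : ι} (h : T.Adj t s) :
    ¬ (T.deleteEdges {s(t, s)}).Reachable t s :=
  (SimpleGraph.isBridge_iff.mp (isAcyclic_iff_forall_adj_isBridge.mp hT h))

lemma self_mem_side {t s : ι} : s ∈ Side T t s := Reachable.refl _

lemma not_mem_side (hT : T.IsAcyclic) {t s : ι} (h : T.Adj t s) : t ∉ Side T t s :=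
  fun hr => bridge_not_reachable hT h hr.symm

lemma side_extend {t s x y : ι} (hx : x ∈ Side T t s) (hadj : T.Adj x y)
    (hne : s(x, y) ≠ s(t, s)) : y ∈ Side T t s :=
  hx.trans (SimpleGraph.Adj.reachable (by simp [hadj, hne]))

lemma side_disjoint (hT : T.IsAcyclic) {t s x : ι} (h : T.Adj t s)
    (hx : x ∈ Side T t s) : x ∉ Side T s t := by
  intro hx'
  have hx'' : (T.deleteEdges {s(t, s)}).Reachable t x := by
    have hsw : s(s, t) = s(t, s) := Sym2.eq_swap
    simpa [Side, hsw] using hx'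
  exact bridge_not_reachable hT h (hx''.trans hx.symm)

/-- Every vertex other than `t` lies on the `s`-side of some edge `{t,s}`. -/
lemma exists_side (hT : T.Connected) {t x : ι} (hx : x ≠ t) :
    ∃ s, T.Adj t s ∧ x ∈ Side T t s := by
  have hr := (SimpleGraph.reachable_iff_reflTransGen _ _).mp (hT.preconnected t x)
  have key : ∀ y, Relation.ReflTransGen T.Adj t y →
      y = t ∨ ∃ s, T.Adj t s ∧ y ∈ Side T t s := by
    intro y hy
    induction hy with
    | refl => exact Or.inl rfl
    | @tail b c hab hbc ih =>
      by_cases hct : c = t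
      · exact Or.inl hct
      rcases ih with rfl | ⟨s, hs, hbs⟩
      · exact Or.inr ⟨c, hbc, self_mem_side⟩
      · by_cases he : s(b, c) = s(t, s)
        · rw [Sym2.eq_iff] at he
          rcases he with ⟨hb, hc⟩ | ⟨hb, hc⟩
          · exact Or.inr ⟨s, hs, by rw [hc]; exact self_mem_side⟩
          · exact absurd hc hct
        · exact Or.inr ⟨s, hs, side_extend hbs hbc he⟩
  rcases key x hr with rfl | h
  · exact absurd rfl hx
  · exact h

/-- Sides nest: if `t—t'—t''` with `t'' ≠ t`, the `t''`-side of `{t',t''}` is inside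
the `t'`-side of `{t,t'}`. -/
lemma side_subset_side (hT : T.IsAcyclic) {t t' t'' : ι} (h1 : T.Adj t t')
    (h2 : T.Adj t' t'') (hne : t'' ≠ t) : Side T t' t'' ⊆ Side T t t' := by
  intro x hx
  have hnr : ¬ (T.deleteEdges {s(t', t'')}).Reachable t'' t' :=
    fun hr => bridge_not_reachable hT h2 hr.symm
  have key : ∀ y, Relation.ReflTransGen (T.deleteEdges {s(t', t'')}).Adj t'' y →
      (T.deleteEdges {s(t, t')}).Reachable t'' y ∨
        (T.deleteEdges {s(t', t'')}).Reachable t'' t' := by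
    intro y hy
    induction hy with
    | refl => exact Or.inl (Reachable.refl _)
    | @tail b c hab hbc ih =>
      rcases ih with ih | ih
      · by_cases he : s(b, c) = s(t, t')
        · rw [Sym2.eq_iff] at he
          rcases he with ⟨rfl, rfl⟩ | ⟨rfl, rfl⟩
          · exact Or.inr ((SimpleGraph.reachable_iff_reflTransGen _ _).mpr (hab.tail hbc))
          · exact Or.inr ((SimpleGraph.reachable_iff_reflTransGen _ _).mpr hab)
        · have hbcT : T.Adj b c := (SimpleGraph.deleteEdges_adj.mp hbc).1
          exact Or.inl (ih.trans (SimpleGraph.Adj.reachable (by simp [hbcT, he])))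
      · exact Or.inr ih
  rcases key x ((SimpleGraph.reachable_iff_reflTransGen _ _).mp hx) with h | h
  · have hadj : (T.deleteEdges {s(t, t')}).Adj t' t'' := by
      refine SimpleGraph.deleteEdges_adj.mpr ⟨h2, ?_⟩
      simp only [Set.mem_singleton_iff, Sym2.eq_iff]
      rintro (⟨ha, hb⟩ | ⟨ha, hb⟩)
      · exact h1.ne ha.symm
      · exact hne hb
    exact hadj.reachable.trans h
  · exact absurd h hnr

/-- If `U` is a connected set of nodes avoiding `t`, any two of its members are
reachable avoiding any edge at `t`. -/
lemma reach_avoiding {U : Set ι} {t : ι} (ht : t ∉ U) {e : Sym2 ι} (he : t ∈ e)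
    {x y : ι} (hx : x ∈ U) (hy : y ∈ U)
    (hr : (T.induce U).Reachable ⟨x, hx⟩ ⟨y, hy⟩) :
    (T.deleteEdges {e}).Reachable x y := by
  have hmap : ∀ a b : U, (T.induce U).Adj a b → (T.deleteEdges {e}).Adj a.val b.val := by
    intro a b hab
    refine SimpleGraph.deleteEdges_adj.mpr ⟨hab, ?_⟩
    simp only [Set.mem_singleton_iff]
    rintro rfl
    rcases Sym2.mem_iff.mp he with rfl | rfl
    · exact ht a.2
    · exact ht b.2
  exact hr.map ⟨Subtype.val, fun {a b} h => hmap a b h⟩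


/-- If a bramble element `A` misses the bag `Y t`, then all bags meeting `A`
lie on one side of `t`. -/
lemma one_side {α : Type} {G : SimpleGraph α} {Y : ι → Set α}
    (htd : IsTreeDecomp G T Y) {A : Set α} (hAne : A.Nonempty)
    (hAconn : (G.induce A).Connected) {t : ι} (hmiss : Y t ∩ A = ∅) :
    ∃ s, T.Adj t s ∧ ∀ x, (∃ v ∈ A, v ∈ Y x) → x ∈ Side T t s := by
  obtain ⟨hT, h2, h3, h4⟩ := htd
  have hnotbag : ∀ v ∈ A, v ∉ Y t := by
    intro v hv hvt
    exact Set.eq_empty_iff_forall_notMem.mp hmiss v ⟨hvt, hv⟩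
  obtain ⟨v₀, hv₀⟩ := hAne
  obtain ⟨x₀, hx₀⟩ := h2 v₀
  have hx₀t : x₀ ≠ t := fun h => hnotbag v₀ hv₀ (h ▸ hx₀)
  obtain ⟨s, hs, hx₀s⟩ := exists_side hT.isConnected hx₀t
  refine ⟨s, hs, ?_⟩
  -- bags of a fixed vertex `v ∉ Y t` all lie on the same side
  have hbag : ∀ v, v ∉ Y t → ∀ x y, v ∈ Y x → v ∈ Y y → x ∈ Side T t s → y ∈ Side T t s := by
    intro v hvt x y hvx hvy hxside
    have hconn := h4 v
    have hr := hconn.preconnected ⟨x, hvx⟩ ⟨y, hvy⟩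
    have := reach_avoiding (T := T) (U := {z | v ∈ Y z}) hvt
      (e := s(t, s)) (Sym2.mem_mk_left t s) hvx hvy hr
    exact hxside.trans this
  -- chain along `A`
  have key : ∀ p : A, Relation.ReflTransGen (G.induce A).Adj ⟨v₀, hv₀⟩ p →
      ∀ x, p.val ∈ Y x → x ∈ Side T t s := by
    intro p hp
    induction hp with
    | refl => exact fun x hx => hbag v₀ (hnotbag v₀ hv₀) x₀ x hx₀ hx hx₀s
    | @tail b c hab hbc ih =>
      intro x hx
      obtain ⟨z, hbz, hcz⟩ := h3 b.val c.val hbc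
      exact hbag c.val (hnotbag c.val c.2) z x hcz hx
        (hbag b.val (hnotbag b.val b.2) z z hbz hbz (ih z hbz))
  intro x ⟨v, hvA, hvx⟩
  exact key ⟨v, hvA⟩ ((SimpleGraph.reachable_iff_reflTransGen _ _).mp
    (hAconn.preconnected _ _)) x hvx

/-- Main lemma: some bag hits every element of the bramble. -/
lemma bramble_hit {α : Type} [Finite ι] {G : SimpleGraph α} {T : SimpleGraph ι}
    {Y : ι → Set α} (htd : IsTreeDecomp G T Y) (ℬ : Set (Set α))
    (hB : ∀ A ∈ ℬ, A.Nonempty ∧ (G.induce A).Connected)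
    (htouch : ∀ A ∈ ℬ, ∀ B ∈ ℬ, Touch G A B) :
    ∃ t, ∀ A ∈ ℬ, (Y t ∩ A).Nonempty := by
  by_contra hcon
  push_neg at hcon
  have hT := htd.1
  -- choose for each node a missed bramble element and its side
  have hchoice : ∀ t : ι, ∃ s, T.Adj t s ∧ ∃ A ∈ ℬ,
      ∀ x, (∃ v ∈ A, v ∈ Y x) → x ∈ Side T t s := by
    intro t
    obtain ⟨A, hA, hmiss⟩ := hcon t
    obtain ⟨s, hs, hside⟩ := one_side htd (hB A hA).1 (hB A hA).2 hmiss
    exact ⟨s, hs, A, hA, hside⟩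
  choose g hgadj A hAmem hside using hchoice
  -- touching elements give intersecting bag sets
  have hmeet : ∀ t t' : ι, ∃ x, (∃ v ∈ A t, v ∈ Y x) ∧ (∃ v ∈ A t', v ∈ Y x) := by
    intro t t'
    rcases htouch (A t) (hAmem t) (A t') (hAmem t') with ⟨v, hv, hv'⟩ | ⟨a, ha, b, hb, hadj⟩
    · obtain ⟨x, hx⟩ := htd.2.1 v
      exact ⟨x, ⟨v, hv, hx⟩, ⟨v, hv', hx⟩⟩
    · obtain ⟨x, hax, hbx⟩ := htd.2.2.1 a b hadj
      exact ⟨x, ⟨a, ha, hax⟩, ⟨b, hb, hbx⟩⟩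
  -- descent
  have hne : Nonempty ι := hT.isConnected.nonempty
  have hfin : Fintype ι := Fintype.ofFinite ι
  have hstep : ∀ t, Side T (g t) (g (g t)) ⊂ Side T t (g t) := by
    intro t
    obtain ⟨x, hx1, hx2⟩ := hmeet t (g t)
    have hxs1 : x ∈ Side T t (g t) := hside t x hx1
    have hxs2 : x ∈ Side T (g t) (g (g t)) := hside (g t) x hx2
    have htt : g (g t) ≠ t := by
      intro h
      rw [h] at hxs2
      exact side_disjoint hT.IsAcyclic (hgadj t) hxs1 hxs2
    refine ⟨side_subset_side hT.IsAcyclic (hgadj t) (hgadj (g t)) htt, ?_⟩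
    intro hsub
    exact not_mem_side hT.IsAcyclic (hgadj (g t)) (hsub self_mem_side)
  obtain ⟨t, -, hmin⟩ := Finset.exists_min_image Finset.univ
    (fun t => (Side T t (g t)).ncard) ⟨hne.some, Finset.mem_univ _⟩
  have h1 := Set.ncard_lt_ncard (hstep t) (Set.toFinite _)
  have h2 := hmin (g t) (Finset.mem_univ _)
  omega


lemma hw_adj {w : ℕ} {p q : Fin w × Fin w} :
    (Hw w).Adj p q ↔ p ≠ q ∧ ((p.1 = q.1 ∨ (q.1 = p.2 ∧ q.2 = p.1)) ∨
      (q.1 = p.1 ∨ (p.1 = q.2 ∧ p.2 = q.1))) := by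
  rw [Hw, SimpleGraph.fromRel_adj]

lemma row_adj {w : ℕ} {i j j' : Fin w} (h : j ≠ j') : (Hw w).Adj (i, j) (i, j') := by
  rw [hw_adj]
  exact ⟨by simp [Prod.ext_iff, h], Or.inl (Or.inl rfl)⟩

lemma cross_adj {w : ℕ} {i j : Fin w} (h : i ≠ j) : (Hw w).Adj (i, j) (j, i) := by
  rw [hw_adj]
  exact ⟨by simp [Prod.ext_iff]; exact fun a => absurd a h, Or.inl (Or.inr ⟨rfl, rfl⟩)⟩

lemma bset_row_mem {w : ℕ} {i j : Fin w} {Z : Finset (Fin w)} (hj : j ∈ Z) :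
    (i, j) ∈ Bset w i Z := Or.inl ⟨rfl, hj⟩

lemma bset_col_mem {w : ℕ} {i j : Fin w} {Z : Finset (Fin w)} (hj : j ∈ Z) :
    (j, i) ∈ Bset w i Z := Or.inr ⟨rfl, hj⟩

lemma bset_conn {w : ℕ} {i : Fin w} {Z : Finset (Fin w)} (hi : i ∉ Z)
    (hZ : Z.Nonempty) : ((Hw w).induce (Bset w i Z)).Connected := by
  obtain ⟨j₀, hj₀⟩ := hZ
  have hhub : (i, j₀) ∈ Bset w i Z := bset_row_mem hj₀
  rw [SimpleGraph.connected_iff]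
  refine ⟨?_, ⟨⟨(i, j₀), hhub⟩⟩⟩
  · -- preconnected: everything reaches the hub
    have hreach : ∀ p : Bset w i Z, ((Hw w).induce (Bset w i Z)).Reachable p ⟨(i, j₀), hhub⟩ := by
      rintro ⟨⟨a, b⟩, hp⟩
      have hrow : ∀ (j : Fin w) (hj : j ∈ Z),
          ((Hw w).induce (Bset w i Z)).Reachable ⟨(i, j), bset_row_mem hj⟩ ⟨(i, j₀), hhub⟩ := by
        intro j hj
        by_cases hjj : j = j₀
        · subst hjj; exact Reachable.refl _
        · exact SimpleGraph.Adj.reachable (by exact row_adj hjj)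
      rcases hp with ⟨ha, hb⟩ | ⟨hb, ha⟩
      · subst ha
        exact hrow b hb
      · subst hb
        have hai : b ≠ a := fun h => hi (h ▸ ha)
        have step : ((Hw w).induce (Bset w b Z)).Adj ⟨(a, b), bset_col_mem ha⟩
            ⟨(b, a), bset_row_mem ha⟩ := by
          exact (cross_adj hai.symm)
        exact step.reachable.trans (hrow a ha)
    intro p q
    exact (hreach p).trans (hreach q).symm


lemma bset_touch {w : ℕ} (hweven : Even w) {i i' : Fin w} {Z Z' : Finset (Fin w)}
    (hi : i ∉ Z) (hi' : i' ∉ Z') (hc : Z.card = w / 2) (hc' : Z'.card = w / 2) :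
    Touch (Hw w) (Bset w i Z) (Bset w i' Z') := by
  by_cases hZZ : (Z ∩ Z').Nonempty
  · obtain ⟨j, hj⟩ := hZZ
    rw [Finset.mem_inter] at hj
    by_cases hii : i = i'
    · subst hii
      exact Or.inl ⟨(i, j), bset_row_mem hj.1, bset_row_mem hj.2⟩
    · refine Or.inr ⟨(j, i), bset_col_mem hj.1, (j, i'), bset_col_mem hj.2, ?_⟩
      exact row_adj hii
  · -- Z and Z' are disjoint, hence complementary halves
    rw [Finset.not_nonempty_iff_eq_empty] at hZZ
    obtain ⟨m, hm⟩ := hweven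
    have hm2 : w / 2 = m := by omega
    have hZc : Z' = Zᶜ := by
      apply Finset.eq_of_subset_of_card_le
      · intro x hx
        rw [Finset.mem_compl]
        intro hxZ
        exact absurd (Finset.mem_inter.mpr ⟨hxZ, hx⟩) (by simp [hZZ])
      · rw [Finset.card_compl, hc, hc']
        simp [Fintype.card_fin]
        omega
    have hiZ' : i ∈ Z' := by rw [hZc, Finset.mem_compl]; exact hi
    have hi'Z : i' ∈ Z := by
      by_contra h
      have : i' ∈ Z' := by rw [hZc, Finset.mem_compl]; exact h
      exact hi' this
    have hii : i ≠ i' := fun h => hi (h ▸ hi'Z)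
    refine Or.inr ⟨(i, i'), bset_row_mem hi'Z, (i', i), bset_row_mem hiZ', ?_⟩
    exact cross_adj hii

lemma bset_nonempty {w : ℕ} (hw2 : 2 ≤ w) {i : Fin w} {Z : Finset (Fin w)}
    (hc : Z.card = w / 2) : (Bset w i Z).Nonempty := by
  have : Z.Nonempty := Finset.card_pos.mp (by omega)
  obtain ⟨j, hj⟩ := this
  exact ⟨(i, j), bset_row_mem hj⟩

/-- Counting: any set hitting all the `Bset`s has at least `w * (w/2) / 2` elements. -/
lemma hit_card {w : ℕ} (hw2 : 2 ≤ w) (hweven : Even w) (X : Set (Fin w × Fin w))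
    (hX : ∀ (i : Fin w) (Z : Finset (Fin w)), i ∉ Z → Z.card = w / 2 →
      (X ∩ Bset w i Z).Nonempty) :
    w * (w / 2) ≤ 2 * X.ncard := by
  classical
  obtain ⟨m, hm⟩ := hweven
  have hm2 : w / 2 = m := by omega
  set F := (X.toFinite).toFinset with hFdef
  have hFcard : X.ncard = F.card := Set.ncard_eq_toFinset_card X (X.toFinite)
  set S : Fin w → Finset (Fin w) :=
    fun i => Finset.univ.filter (fun j => j ≠ i ∧ ((i, j) ∈ F ∨ (j, i) ∈ F)) with hSdef
  have hS : ∀ i, w / 2 ≤ (S i).card := by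
    intro i
    by_contra hlt
    push_neg at hlt
    set P := Finset.univ \ insert i (S i) with hPdef
    have hPcard : w / 2 ≤ P.card := by
      have h1 : P.card = w - (insert i (S i)).card := by
        rw [hPdef, Finset.card_sdiff_of_subset (Finset.subset_univ _), Finset.card_univ,
          Fintype.card_fin]
      have h2 : (insert i (S i)).card ≤ (S i).card + 1 := Finset.card_insert_le _ _
      omega
    obtain ⟨Z, hZP, hZcard⟩ := Finset.exists_subset_card_eq hPcard
    have hiZ : i ∉ Z := by
      intro h
      have := hZP h
      rw [hPdef, Finset.mem_sdiff] at this
      exact this.2 (Finset.mem_insert_self i _)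
    obtain ⟨p, hpX, hpB⟩ := hX i Z hiZ hZcard
    have hpF : p ∈ F := (Set.Finite.mem_toFinset _).mpr hpX
    have hZS : ∀ j ∈ Z, j ∉ S i := by
      intro j hj hjS
      have := hZP hj
      rw [hPdef, Finset.mem_sdiff] at this
      exact this.2 (Finset.mem_insert_of_mem hjS)
    rcases hpB with ⟨h1, h2⟩ | ⟨h1, h2⟩
    · refine hZS p.2 h2 ?_
      rw [hSdef]
      simp only [Finset.mem_filter, Finset.mem_univ, true_and]
      refine ⟨fun h => hiZ (h ▸ h2), Or.inl ?_⟩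
      rwa [← h1, Prod.mk.eta]
    · refine hZS p.1 h2 ?_
      rw [hSdef]
      simp only [Finset.mem_filter, Finset.mem_univ, true_and]
      refine ⟨fun h => hiZ (h ▸ h2), Or.inr ?_⟩
      rwa [← h1, Prod.mk.eta]
  -- double counting
  have hsum1 : w * (w / 2) ≤ ∑ i : Fin w, (S i).card := by
    calc w * (w / 2) = ∑ _i : Fin w, (w / 2) := by
          rw [Finset.sum_const, Finset.card_univ, Fintype.card_fin, smul_eq_mul]
      _ ≤ ∑ i : Fin w, (S i).card := Finset.sum_le_sum (fun i _ => hS i)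
  have hsum2 : ∑ i : Fin w, (S i).card ≤ 2 * F.card := by
    have hsub : ∀ i, (S i).card ≤
        (Finset.univ.filter (fun j => (i, j) ∈ F)).card +
        (Finset.univ.filter (fun j => (j, i) ∈ F)).card := by
      intro i
      refine le_trans (Finset.card_le_card ?_) (Finset.card_union_le _ _)
      intro j hj
      rw [hSdef] at hj
      simp only [Finset.mem_filter, Finset.mem_univ, true_and] at hj
      rcases hj.2 with h | h
      · exact Finset.mem_union_left _ (by simp [h])
      · exact Finset.mem_union_right _ (by simp [h])
    have hF' : F.card = ∑ p : Fin w × Fin w, if p ∈ F then 1 else 0 := by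
      rw [← Finset.card_filter]
      congr 1
      ext p
      simp
    have e1 : ∑ i : Fin w, (Finset.univ.filter (fun j => (i, j) ∈ F)).card = F.card := by
      simp_rw [Finset.card_filter]
      rw [hF', Fintype.sum_prod_type]
    have e2 : ∑ i : Fin w, (Finset.univ.filter (fun j => (j, i) ∈ F)).card = F.card := by
      simp_rw [Finset.card_filter]
      rw [hF', Fintype.sum_prod_type, Finset.sum_comm]
    calc ∑ i : Fin w, (S i).card
        ≤ ∑ i : Fin w, ((Finset.univ.filter (fun j => (i, j) ∈ F)).card +
            (Finset.univ.filter (fun j => (j, i) ∈ F)).card) :=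
          Finset.sum_le_sum (fun i _ => hsub i)
      _ = F.card + F.card := by rw [Finset.sum_add_distrib, e1, e2]
      _ = 2 * F.card := by ring
  omega


end TwProof

theorem tw_Hw_lower_bound (w : ℕ) (hw : 0 < w) (hweven : Even w) (k : ℕ)
    (h : twLE (Hw w) k) : (w : ℝ) ^ 2 / 16 - 1 ≤ k := by
  obtain ⟨ι, hfin, T, Y, htd, hbound⟩ := h
  haveI := hfin
  have hw2 : 2 ≤ w := by
    obtain ⟨m, hm⟩ := hweven
    omega
  have hB : ∀ A ∈ Bfam w, A.Nonempty ∧ ((Hw w).induce A).Connected := by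
    rintro A ⟨i, Z, hiZ, hc, rfl⟩
    have hZne : Z.Nonempty := Finset.card_pos.mp (by omega)
    exact ⟨TwProof.bset_nonempty hw2 hc, TwProof.bset_conn hiZ hZne⟩
  have htouch : ∀ A ∈ Bfam w, ∀ B ∈ Bfam w, Touch (Hw w) A B := by
    rintro A ⟨i, Z, hiZ, hc, rfl⟩ B ⟨i', Z', hiZ', hc', rfl⟩
    exact TwProof.bset_touch hweven hiZ hiZ' hc hc'
  obtain ⟨t, ht⟩ := TwProof.bramble_hit htd (Bfam w) hB htouch
  have hX : ∀ (i : Fin w) (Z : Finset (Fin w)), i ∉ Z → Z.card = w / 2 →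
      ((Y t) ∩ Bset w i Z).Nonempty := by
    intro i Z h1 h2
    exact ht (Bset w i Z) ⟨i, Z, h1, h2, rfl⟩
  have hcount := TwProof.hit_card hw2 hweven (Y t) hX
  have hYk : (Y t).ncard ≤ k + 1 := hbound t
  obtain ⟨m, hm⟩ := hweven
  have hm2 : w / 2 = m := by omega
  rw [hm2] at hcount
  have h1 : w * m ≤ 2 * (k + 1) :=
    hcount.trans (Nat.mul_le_mul_left 2 hYk)
  have hw4 : w * w ≤ 4 * (k + 1) := by
    calc w * w = 2 * (w * m) := by rw [hm]; ring
      _ ≤ 2 * (2 * (k + 1)) := Nat.mul_le_mul_left 2 h1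
      _ = 4 * (k + 1) := by ring
  have hcast : (w : ℝ) * w ≤ 4 * ((k : ℝ) + 1) := by exact_mod_cast hw4
  have hsq : (w : ℝ) ^ 2 ≤ 16 * ((k : ℝ) + 1) := by nlinarith
  linarith

end
end

section
/- There exists an infinite family of graphs {H_w : w ≥ 1} such that tcw(H_w) ≤ w + 1 and tw(H_w) ≥ w²/16 − 1; hence the treewidth of H_w is Ω(tcw(H_w)²). -/
open scoped Classical

noncomputable section
open scoped Classical
open MGraph

section Helpers
open SimpleGraph

variable {V ι α : Type}

/-- adjacency restricted to a vertex set -/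
def RAdj (T : SimpleGraph ι) (S : Set ι) (a b : ι) : Prop := T.Adj a b ∧ a ∈ S ∧ b ∈ S

lemma rtg_mono {T : SimpleGraph ι} {S S' : Set ι} (h : S ⊆ S') {a b : ι}
    (hr : Relation.ReflTransGen (RAdj T S) a b) : Relation.ReflTransGen (RAdj T S') a b := by
  induction hr with
  | refl => exact .refl
  | tail _ h2 ih => exact ih.tail ⟨h2.1, h h2.2.1, h h2.2.2⟩

lemma reach_induce_rtg {T : SimpleGraph ι} {S : Set ι} {a b : ↥S}
    (h : (T.induce S).Reachable a b) : Relation.ReflTransGen (RAdj T S) a.1 b.1 := by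
  obtain ⟨p⟩ := h
  induction p with
  | nil => exact .refl
  | cons h p ih => exact Relation.ReflTransGen.head ⟨h, _root_.Subtype.mem _, _root_.Subtype.mem _⟩ ih

lemma rtg_reach_delete {T : SimpleGraph ι} {S : Set ι} {x y : ι} (hx : x ∉ S) {a b : ι}
    (h : Relation.ReflTransGen (RAdj T S) a b) :
    (T.deleteEdges {s(x, y)}).Reachable a b := by
  induction h with
  | refl => exact Reachable.refl _
  | tail _ h2 ih =>
      refine ih.trans (Adj.reachable ?_)
      rw [SimpleGraph.deleteEdges_adj]
      refine ⟨h2.1, ?_⟩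
      simp only [Set.mem_singleton_iff, Sym2.eq_iff]
      rintro (⟨rfl, rfl⟩ | ⟨rfl, rfl⟩)
      · exact hx h2.2.1
      · exact hx h2.2.2

lemma walk_avoid_reach_delete {T : SimpleGraph ι} {x y : ι} :
    ∀ {a b : ι} (p : T.Walk a b), x ∉ p.support → (T.deleteEdges {s(x, y)}).Reachable a b := by
  intro a b p
  induction p with
  | nil => exact fun _ => Reachable.refl _
  | @cons a u b h p ih =>
      intro hx
      rw [SimpleGraph.Walk.support_cons] at hx
      have h1 : x ∉ p.support := fun hh => hx (List.mem_cons_of_mem _ hh)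
      have ha : x ≠ a := fun hh => hx (hh ▸ List.mem_cons_self)
      refine (Adj.reachable ?_).trans (ih h1)
      rw [SimpleGraph.deleteEdges_adj]
      refine ⟨h, ?_⟩
      simp only [Set.mem_singleton_iff, Sym2.eq_iff]
      rintro (⟨rfl, rfl⟩ | ⟨rfl, rfl⟩)
      · exact ha rfl
      · exact h1 (SimpleGraph.Walk.start_mem_support p)

lemma bramble_hitting [Finite α] [Finite ι] {G : SimpleGraph α}
    {T : SimpleGraph ι} {Y : ι → Set α} (hdec : IsTreeDecomp G T Y)
    {ℬ : Set (Set α)} (hbr : IsBramble G ℬ) :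
    ∃ x, ∀ A ∈ ℬ, (Y x ∩ A).Nonempty := by
  classical
  obtain ⟨htree, hcov, hedge, hconn⟩ := hdec
  by_contra hcon
  push_neg at hcon
  set N : Set α → Set ι := fun B => {z | (Y z ∩ B).Nonempty} with hN
  -- connectivity of N B
  have hF : ∀ (v : α) (z z' : ι), v ∈ Y z → v ∈ Y z' →
      Relation.ReflTransGen (RAdj T {x | v ∈ Y x}) z z' := by
    intro v z z' hz hz'
    exact reach_induce_rtg ((hconn v).preconnected ⟨z, hz⟩ ⟨z', hz'⟩)
  have hFsub : ∀ (B : Set α), ∀ v ∈ B, {x | v ∈ Y x} ⊆ N B := by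
    intro B v hv z hz
    exact ⟨v, hz, hv⟩
  have key : ∀ B ∈ ℬ, ∀ z ∈ N B, ∀ z' ∈ N B, Relation.ReflTransGen (RAdj T (N B)) z z' := by
    intro B hB z hz z' hz'
    obtain ⟨v, hvY, hvB⟩ := hz
    obtain ⟨v', hv'Y, hv'B⟩ := hz'
    have hrtg : Relation.ReflTransGen (RAdj G B) v v' :=
      reach_induce_rtg (((hbr.1 B hB).preconnected) ⟨v, hvB⟩ ⟨v', hv'B⟩)
    clear hv'B
    revert z'
    induction hrtg with
    | refl => intro z' hv'Y; exact rtg_mono (hFsub B v hvB) (hF v z z' hvY hv'Y)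
    | @tail u v' _ h2 ih =>
        intro z' hv'Y
        obtain ⟨z₁, hz₁u, hz₁v'⟩ := hedge u v' h2.1
        exact (ih z₁ hz₁u).trans (rtg_mono (hFsub B v' h2.2.2) (hF v' z₁ z' hz₁v' hv'Y))
  -- choose a bramble element avoiding each bag
  have hA : ∀ x, ∃ B, B ∈ ℬ ∧ (N B).Nonempty ∧ x ∉ N B ∧ B ∈ ℬ := by
    intro x
    obtain ⟨B, hB, hBx⟩ := hcon x
    refine ⟨B, hB, ?_, ?_, hB⟩
    · obtain ⟨⟨v, hv⟩⟩ := (hbr.1 B hB).nonempty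
      obtain ⟨z, hz⟩ := hcov v
      exact ⟨z, v, hz, hv⟩
    · intro hmem
      have : (Y x ∩ B).Nonempty := hmem
      rw [hBx] at this
      exact Set.not_nonempty_empty this
  set A : ι → Set α := fun x => (hA x).choose with hAdef
  have hAm : ∀ x, A x ∈ ℬ := fun x => (hA x).choose_spec.1
  have hAne : ∀ x, (N (A x)).Nonempty := fun x => (hA x).choose_spec.2.1
  have hAx : ∀ x, x ∉ N (A x) := fun x => (hA x).choose_spec.2.2.1
  -- choose a direction for each node
  have hf : ∀ x, ∃ y, T.Adj x y ∧ ∀ z ∈ N (A x), (T.deleteEdges {s(x, y)}).Reachable y z := by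
    intro x
    obtain ⟨z₀, hz₀⟩ := hAne x
    have hxz : x ≠ z₀ := fun h => hAx x (h ▸ hz₀)
    obtain ⟨wk⟩ := htree.isConnected.preconnected x z₀
    obtain ⟨pv, pp⟩ := wk.toPath
    cases pv with
    | nil => exact absurd rfl hxz
    | @cons _ u _ h q =>
        rw [SimpleGraph.Walk.cons_isPath_iff] at pp
        refine ⟨u, h, ?_⟩
        intro z hz
        exact (walk_avoid_reach_delete q pp.2).trans
          (rtg_reach_delete (hAx x) (key _ (hAm x) z₀ hz₀ z hz))
  set f : ι → ι := fun x => (hf x).choose with hfdef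
  have hf1 : ∀ x, T.Adj x (f x) := fun x => (hf x).choose_spec.1
  have hf2 : ∀ x z, z ∈ N (A x) → (T.deleteEdges {s(x, f x)}).Reachable (f x) z :=
    fun x => (hf x).choose_spec.2
  haveI : Fintype ι := Fintype.ofFinite ι
  haveI : Fintype ↥T.edgeSet := Fintype.ofFinite _
  have hcard : T.edgeFinset.card + 1 = Fintype.card ι := htree.card_edgeFinset
  obtain ⟨x, -, x', -, hxx', heq⟩ :=
    Finset.exists_ne_map_eq_of_card_lt_of_maps_to
      (s := Finset.univ) (t := T.edgeFinset) (f := fun x => s(x, f x))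
      (by rw [Finset.card_univ]; omega)
      (fun a _ => SimpleGraph.mem_edgeFinset.mpr (hf1 a))
  rcases Sym2.eq_iff.mp heq with ⟨h1, h2⟩ | ⟨h1, h2⟩
  · exact hxx' h1
  -- h1 : x = f x', h2 : f x = x'
  -- find a common node of N (A x) and N (A x')
  obtain ⟨z, hz1, hz2⟩ : ∃ z, z ∈ N (A x) ∧ z ∈ N (A x') := by
    rcases hbr.2 (A x) (hAm x) (A x') (hAm x') with ⟨v, hv1, hv2⟩ | ⟨a, ha, b, hb, hab⟩
    · obtain ⟨z, hz⟩ := hcov v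
      exact ⟨z, ⟨v, hz, hv1⟩, ⟨v, hz, hv2⟩⟩
    · obtain ⟨z, hza, hzb⟩ := hedge a b hab
      exact ⟨z, ⟨a, hza, ha⟩, ⟨b, hzb, hb⟩⟩
  have r1 : (T.deleteEdges {s(x, x')}).Reachable x' z := by
    have := hf2 x z hz1; rwa [h2] at this
  have r2 : (T.deleteEdges {s(x, x')}).Reachable x z := by
    have := hf2 x' z hz2
    rw [← h1] at this
    rwa [show s(x', x) = s(x, x') from Sym2.eq_swap] at this
  have hadj : T.Adj x x' := h2 ▸ hf1 x
  have hbridge := (SimpleGraph.isAcyclic_iff_forall_adj_isBridge.mp htree.IsAcyclic) hadj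
  rw [SimpleGraph.isBridge_iff] at hbridge
  exact hbridge (r2.trans r1.symm)

end Helpers
section Bramble
open SimpleGraph

lemma hw_adj {w : ℕ} {p q : Fin w × Fin w} :
    (Hw w).Adj p q ↔ p ≠ q ∧ ((p.1 = q.1 ∨ (q.1 = p.2 ∧ q.2 = p.1)) ∨
      (q.1 = p.1 ∨ (p.1 = q.2 ∧ p.2 = q.1))) := by
  rw [Hw, SimpleGraph.fromRel_adj]

lemma bset_row {w : ℕ} {i j : Fin w} {Z : Finset (Fin w)} (hj : j ∈ Z) :
    ((i, j) : Fin w × Fin w) ∈ Bset w i Z := Or.inl ⟨rfl, hj⟩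

lemma bset_col {w : ℕ} {i j : Fin w} {Z : Finset (Fin w)} (hj : j ∈ Z) :
    ((j, i) : Fin w × Fin w) ∈ Bset w i Z := Or.inr ⟨rfl, hj⟩

lemma hw_bramble {w : ℕ} (hw : 2 ≤ w) : IsBramble (Hw w) (Bfam w) := by
  have hcZ : ∀ (Z : Finset (Fin w)), Z.card = w / 2 → Z.Nonempty := by
    intro Z hZ
    rw [← Finset.card_pos, hZ]
    omega
  constructor
  · rintro A ⟨i, Z, hiZ, hcard, rfl⟩
    obtain ⟨j₀, hj₀⟩ := hcZ Z hcard
    have hmem0 : ((i, j₀) : Fin w × Fin w) ∈ Bset w i Z := bset_row hj₀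
    have pivot : ∀ (p : Fin w × Fin w) (hp : p ∈ Bset w i Z),
        ((Hw w).induce (Bset w i Z)).Reachable ⟨p, hp⟩ ⟨(i, j₀), hmem0⟩ := by
      have row : ∀ (j : Fin w) (hj : j ∈ Z),
          ((Hw w).induce (Bset w i Z)).Reachable ⟨(i, j), bset_row hj⟩ ⟨(i, j₀), hmem0⟩ := by
        intro j hj
        by_cases hjj : j = j₀
        · subst hjj; exact Reachable.refl _
        · refine Adj.reachable ?_
          show (Hw w).Adj (i, j) (i, j₀)
          rw [hw_adj]
          refine ⟨?_, Or.inl (Or.inl rfl)⟩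
          simp only [ne_eq, Prod.mk.injEq, not_and]
          exact fun _ => hjj
      rintro ⟨p1, p2⟩ (⟨h1, h2⟩ | ⟨h1, h2⟩)
      · dsimp at h1 h2
        subst h1
        exact row p2 h2
      · dsimp at h1 h2
        subst h1
        have hne : p1 ≠ p2 := fun h => hiZ (h ▸ h2)
        have hadj : (Hw w).Adj (p1, p2) (p2, p1) := by
          rw [hw_adj]
          refine ⟨?_, Or.inl (Or.inr ⟨rfl, rfl⟩)⟩
          simp only [ne_eq, Prod.mk.injEq, not_and]
          exact fun h => absurd h hne
        exact (Adj.reachable (show ((Hw w).induce (Bset w p2 Z)).Adj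
          ⟨(p1, p2), bset_col h2⟩ ⟨(p2, p1), bset_row h2⟩ from hadj)).trans (row p1 h2)
    rw [SimpleGraph.connected_iff]
    refine ⟨?_, ⟨⟨(i, j₀), hmem0⟩⟩⟩
    intro a b
    exact (pivot a.1 a.2).trans (pivot b.1 b.2).symm
  · rintro A ⟨i, Z, hiZ, hZ, rfl⟩ B ⟨i', Z', hiZ', hZ', rfl⟩
    obtain ⟨j, hj⟩ := hcZ Z hZ
    obtain ⟨j', hj'⟩ := hcZ Z' hZ'
    by_cases hii : i = i'
    · subst hii
      by_cases hjj : j = j'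
      · exact Or.inl ⟨(i, j), bset_row hj, bset_row (hjj ▸ hj')⟩
      · refine Or.inr ⟨(i, j), bset_row hj, (i, j'), bset_row hj', ?_⟩
        rw [hw_adj]
        exact ⟨by simp [hjj], Or.inl (Or.inl rfl)⟩
    · by_cases hZZ : ∃ a, a ∈ Z ∧ a ∈ Z'
      · obtain ⟨a, ha, ha'⟩ := hZZ
        refine Or.inr ⟨(a, i), bset_col ha, (a, i'), bset_col ha', ?_⟩
        rw [hw_adj]
        exact ⟨by simp [hii], Or.inl (Or.inl rfl)⟩
      · by_cases hi'Z : i' ∈ Z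
        · by_cases hiZ'2 : i ∈ Z'
          · exact Or.inl ⟨(i', i), bset_col hi'Z, bset_row hiZ'2⟩
          · refine Or.inr ⟨(i', i), bset_col hi'Z, (i', j'), bset_row hj', ?_⟩
            rw [hw_adj]
            have : i ≠ j' := fun h => hiZ'2 (h ▸ hj')
            exact ⟨by simp [this], Or.inl (Or.inl rfl)⟩
        · by_cases hiZ'2 : i ∈ Z'
          · refine Or.inr ⟨(i, j), bset_row hj, (i, i'), bset_col hiZ'2, ?_⟩
            rw [hw_adj]
            have : j ≠ i' := fun h => hi'Z (h ▸ hj)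
            exact ⟨by simp [this], Or.inl (Or.inl rfl)⟩
          · exfalso
            have hdisj : Disjoint Z Z' := by
              rw [Finset.disjoint_left]
              intro a ha ha'
              exact hZZ ⟨a, ha, ha'⟩
            have hdisj2 : Disjoint (Z ∪ Z') ({i, i'} : Finset (Fin w)) := by
              rw [Finset.disjoint_right]
              intro a ha
              rw [Finset.mem_insert, Finset.mem_singleton] at ha
              rw [Finset.mem_union]
              rcases ha with rfl | rfl
              · exact fun h => h.elim (fun h => hiZ h) (fun h => hiZ'2 h)
              · exact fun h => h.elim (fun h => hi'Z h) (fun h => hiZ' h)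
            have hcard : (Z ∪ Z' ∪ ({i, i'} : Finset (Fin w))).card = w / 2 + w / 2 + 2 := by
              rw [Finset.card_union_of_disjoint hdisj2, Finset.card_union_of_disjoint hdisj,
                hZ, hZ', Finset.card_pair hii]
            have hle := Finset.card_le_univ (Z ∪ Z' ∪ ({i, i'} : Finset (Fin w)))
            rw [hcard, Fintype.card_fin] at hle
            omega

lemma bag_lower {w : ℕ} (hw : 2 ≤ w) {S : Set (Fin w × Fin w)}
    (hhit : ∀ (i : Fin w) (Z : Finset (Fin w)), i ∉ Z → Z.card = w / 2 →
      (S ∩ Bset w i Z).Nonempty) :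
    w * w ≤ 4 * S.ncard := by
  classical
  haveI : Fintype ↥S := Fintype.ofFinite _
  set Ti : Fin w → Finset (Fin w) :=
    fun i => (Finset.univ.erase i).filter (fun j => (i, j) ∈ S ∨ (j, i) ∈ S) with hTi
  have claim1 : ∀ i, w - w / 2 ≤ (Ti i).card := by
    intro i
    set C : Finset (Fin w) :=
      (Finset.univ.erase i).filter (fun j => ¬((i, j) ∈ S ∨ (j, i) ∈ S)) with hC
    have hsum : (Ti i).card + C.card = w - 1 := by
      rw [hTi, hC, Finset.card_filter_add_card_filter_not,
        Finset.card_erase_of_mem (Finset.mem_univ i), Finset.card_univ, Fintype.card_fin]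
    have hClt : C.card < w / 2 := by
      by_contra hcc
      push_neg at hcc
      obtain ⟨Z, hZC, hZcard⟩ := Finset.exists_subset_card_eq hcc
      have hiZ : i ∉ Z := by
        intro hi
        have := hZC hi
        rw [hC, Finset.mem_filter, Finset.mem_erase] at this
        exact this.1.1 rfl
      obtain ⟨p, hpS, hpB⟩ := hhit i Z hiZ hZcard
      have : ∀ j ∈ Z, ¬((i, j) ∈ S ∨ (j, i) ∈ S) := by
        intro j hjZ
        have := hZC hjZ
        rw [hC, Finset.mem_filter] at this
        exact this.2
      rcases hpB with ⟨h1, h2⟩ | ⟨h1, h2⟩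
      · exact this p.2 h2 (Or.inl (by rwa [show ((i, p.2) : Fin w × Fin w) = p from Prod.ext h1.symm rfl]))
      · exact this p.1 h2 (Or.inr (by rwa [show ((p.1, i) : Fin w × Fin w) = p from Prod.ext rfl h1.symm]))
    omega
  have claim2 : ∑ i, (Ti i).card ≤ 2 * S.ncard := by
    have hsig := Finset.card_sigma Finset.univ Ti
    have hinj : (Finset.univ.sigma Ti).card ≤ (S.toFinset ×ˢ (Finset.univ : Finset Bool)).card := by
      refine Finset.card_le_card_of_injOn
        (fun x => if (x.1, x.2) ∈ S then ((x.1, x.2), true) else ((x.2, x.1), false)) ?_ ?_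
      · rintro ⟨a1, a2⟩ ha
        dsimp only
        rw [Finset.mem_coe, Finset.mem_sigma] at ha
        have hmem := ha.2
        rw [hTi, Finset.mem_filter] at hmem
        by_cases h : (a1, a2) ∈ S
        · rw [if_pos h]
          exact Finset.mem_product.mpr ⟨Set.mem_toFinset.mpr h, Finset.mem_univ _⟩
        · rw [if_neg h]
          have : (a2, a1) ∈ S := (hmem.2).resolve_left h
          exact Finset.mem_product.mpr ⟨Set.mem_toFinset.mpr this, Finset.mem_univ _⟩
      · rintro ⟨a1, a2⟩ - ⟨b1, b2⟩ - h
        dsimp at h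
        split_ifs at h with h1 h2 h2 <;>
          simp only [Prod.mk.injEq] at h
        · obtain ⟨⟨e1, e2⟩, -⟩ := h
          subst e1; subst e2; rfl
        · exact absurd h.2 (by simp)
        · exact absurd h.2 (by simp)
        · obtain ⟨⟨e1, e2⟩, -⟩ := h
          subst e1; subst e2; rfl
    rw [Finset.card_product, Finset.card_univ, Fintype.card_bool] at hinj
    rw [hsig] at hinj
    rw [Set.ncard_eq_toFinset_card' S]
    omega
  have hlow : w * (w - w / 2) ≤ ∑ i, (Ti i).card := by
    calc w * (w - w / 2) = ∑ _i : Fin w, (w - w / 2) := by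
          rw [Finset.sum_const, Finset.card_univ, Fintype.card_fin, smul_eq_mul]
      _ ≤ ∑ i, (Ti i).card := Finset.sum_le_sum (fun i _ => claim1 i)
  have h2 : w ≤ 2 * (w - w / 2) := by omega
  calc w * w ≤ w * (2 * (w - w / 2)) := Nat.mul_le_mul_left w h2
    _ = 2 * (w * (w - w / 2)) := by ring
    _ ≤ 2 * (2 * S.ncard) := by
        have := le_trans hlow claim2
        omega
    _ = 4 * S.ncard := by ring
end Bramble
section TCW
open SimpleGraph

variable {V ι : Type}

lemma centerStep_verts_subset {X : Set V} {G H : MGraph V}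
    (h : Relation.ReflTransGen (MGraph.CenterStep X) G H) : H.verts ⊆ G.verts := by
  induction h with
  | refl => exact subset_rfl
  | tail _ h2 ih =>
      refine subset_trans ?_ ih
      rcases h2 with ⟨x, y, z, _, _, _, _, _, _, rfl⟩ | ⟨x, _, _, _, _, rfl⟩
      · exact Set.diff_subset
      · exact Set.diff_subset

lemma star_adj {ℓ : ℕ} {a b : Option (Fin ℓ)} :
    (_root_.starGraph ℓ).Adj a b ↔ a ≠ b ∧ (a = none ∨ b = none) := by
  rw [_root_.starGraph, SimpleGraph.fromRel_adj]

/-- Every vertex reachable from `some i` after deleting the star edge is `some i`. -/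
lemma star_reach_del {ℓ : ℕ} {i : Fin ℓ} {e : Sym2 (Option (Fin ℓ))}
    (he : e = s(some i, none)) {t : Option (Fin ℓ)}
    (h : ((_root_.starGraph ℓ).deleteEdges {e}).Reachable (some i) t) : t = some i := by
  obtain ⟨p⟩ := h
  cases p with
  | nil => rfl
  | cons h q =>
      exfalso
      rw [SimpleGraph.deleteEdges_adj] at h
      obtain ⟨ha, hb⟩ := h
      obtain ⟨hne, h0 | h0⟩ := star_adj.mp ha
      · exact Option.some_ne_none i h0
      · subst h0
        exact hb (by rw [he]; exact Set.mem_singleton _)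

lemma star_isTree (ℓ : ℕ) : (_root_.starGraph ℓ).IsTree := by
  have hreach : ∀ c, (_root_.starGraph ℓ).Reachable none c := by
    intro c
    by_cases hc : c = none
    · subst hc; exact Reachable.refl _
    · exact SimpleGraph.Adj.reachable (star_adj.mpr ⟨fun h => hc h.symm, Or.inl rfl⟩)
  constructor
  · rw [SimpleGraph.connected_iff]
    exact ⟨fun a b => (hreach a).symm.trans (hreach b), ⟨none⟩⟩
  · rw [SimpleGraph.isAcyclic_iff_forall_adj_isBridge]
    intro a b hab
    rw [SimpleGraph.isBridge_iff]
    intro hre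
    obtain ⟨hne, h0 | h0⟩ := star_adj.mp hab
    · subst h0
      obtain ⟨i, rfl⟩ := Option.ne_none_iff_exists'.mp (Ne.symm hne)
      exact Option.some_ne_none _ (star_reach_del Sym2.eq_swap hre.symm).symm
    · subst h0
      obtain ⟨i, rfl⟩ := Option.ne_none_iff_exists'.mp hne
      exact Option.some_ne_none _ (star_reach_del rfl hre).symm
/-- The bags of the star tree-cut decomposition. -/
def starBags (w : ℕ) : Option (Fin w) → Set (Fin w × Fin w) :=
  fun o => Option.rec ∅ (fun i => {p | p.1 = i}) o

lemma cut_card_le {w : ℕ} (i : Fin w) (A B : Set (Fin w × Fin w))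
    (hAB : (∀ p ∈ A, p.1 = i) ∧ (∀ q ∈ B, q.1 ≠ i) ∨
           (∀ p ∈ A, p.1 ≠ i) ∧ (∀ q ∈ B, q.1 = i)) :
    Multiset.card ((Hw w).toMGraph.cut A B) ≤ w + 1 := by
  classical
  have hkey : (Hw w).toMGraph.cut A B =
      Multiset.filter (fun e => ∃ a ∈ A, ∃ b ∈ B, e = s(a, b)) (Hw w).toMGraph.edges := by
    rw [MGraph.cut]
    congr 1
  rw [hkey]
  have hform : ∀ e ∈ Multiset.filter (fun e => ∃ a ∈ A, ∃ b ∈ B, e = s(a, b))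
      (Hw w).toMGraph.edges,
      e ∈ Finset.univ.image
        (fun j : Fin w => s(((i, j) : Fin w × Fin w), ((j, i) : Fin w × Fin w))) := by
    intro e he
    obtain ⟨heE, a, haA, b, hbB, rfl⟩ := Multiset.mem_filter.mp he
    obtain ⟨a1, a2⟩ := a
    obtain ⟨b1, b2⟩ := b
    have hadj : (Hw w).Adj (a1, a2) (b1, b2) := by
      rw [← SimpleGraph.mem_edgeSet]
      have : s(((a1, a2) : Fin w × Fin w), ((b1, b2) : Fin w × Fin w)) ∈
          (Set.toFinite (Hw w).edgeSet).toFinset.val := heE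
      rwa [Finset.mem_val, Set.Finite.mem_toFinset] at this
    have hne : a1 ≠ b1 := by
      rcases hAB with ⟨h1, h2⟩ | ⟨h1, h2⟩
      · have := h1 _ haA; have h2' := h2 _ hbB
        dsimp at this h2'
        rw [this]; exact fun h => h2' h.symm
      · have h1' := h1 _ haA; have h2' := h2 _ hbB
        dsimp at h1' h2'
        intro h; exact h1' (h.trans h2')
    rw [hw_adj] at hadj
    have hb : b1 = a2 ∧ b2 = a1 := by
      obtain ⟨-, (h | ⟨h1, h2⟩) | (h | ⟨h1, h2⟩)⟩ := hadj
      · exact absurd h hne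
      · exact ⟨h1, h2⟩
      · exact absurd h.symm hne
      · exact ⟨h2.symm, h1.symm⟩
    obtain ⟨hb1, hb2⟩ := hb
    rcases hAB with ⟨h1, -⟩ | ⟨-, h2⟩
    · have ha1 : a1 = i := h1 _ haA
      refine Finset.mem_image.mpr ⟨a2, Finset.mem_univ _, ?_⟩
      rw [← ha1, hb1, hb2]
    · have hb1i : b1 = i := h2 _ hbB
      have hia : a2 = i := hb1.symm.trans hb1i
      refine Finset.mem_image.mpr ⟨a1, Finset.mem_univ _, ?_⟩
      rw [hb1, hb2, ← hia, Sym2.eq_swap]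
  have hnd : (Multiset.filter (fun e => ∃ a ∈ A, ∃ b ∈ B, e = s(a, b))
      (Hw w).toMGraph.edges).Nodup :=
    Multiset.Nodup.filter _ ((Set.toFinite (Hw w).edgeSet).toFinset.nodup)
  have hcard : Multiset.card (Multiset.filter (fun e => ∃ a ∈ A, ∃ b ∈ B, e = s(a, b))
      (Hw w).toMGraph.edges) = (Finset.mk _ hnd).card := rfl
  rw [hcard]
  refine le_trans (Finset.card_le_card (fun e he => hform e he)) ?_
  refine le_trans Finset.card_image_le ?_
  simp

lemma torso_verts_ncard_le [Finite V] [Finite ι] (G : MGraph V) (T : SimpleGraph ι)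
    (X : ι → Set V) (t : ι) :
    (MGraph.torso G T X t).verts.ncard ≤ (X t).ncard + {s | T.Adj t s}.ncard := by
  refine le_trans (Set.ncard_union_le _ _) (add_le_add ?_ ?_)
  · exact Set.ncard_image_le (Set.toFinite _)
  · refine le_trans (Set.ncard_image_le (Set.toFinite _)) (Set.ncard_le_ncard ?_ (Set.toFinite _))
    exact fun s hs => hs.1

lemma edgeSide_leaf {w : ℕ} (i : Fin w) :
    ∀ p ∈ MGraph.edgeSide (_root_.starGraph w) (starBags w) (some i) none, p.1 = i := by
  intro p hp
  simp only [MGraph.edgeSide, Set.mem_iUnion, Set.mem_setOf_eq] at hp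
  obtain ⟨t, ht, hpt⟩ := hp
  have := star_reach_del rfl ht
  subst this
  exact hpt

lemma edgeSide_center {w : ℕ} (i : Fin w) :
    ∀ p ∈ MGraph.edgeSide (_root_.starGraph w) (starBags w) none (some i), p.1 ≠ i := by
  intro p hp hpi
  simp only [MGraph.edgeSide, Set.mem_iUnion, Set.mem_setOf_eq] at hp
  obtain ⟨t, ht, hpt⟩ := hp
  cases t with
  | none => exact hpt
  | some j =>
      have hji : j = i := (hpt : p.1 = j).symm.trans hpi
      subst hji
      have : (none : Option (Fin w)) = some j :=
        star_reach_del (show s(none, some j) = s(some j, none) from Sym2.eq_swap) ht.symm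
      exact Option.some_ne_none _ this.symm

lemma hw_tcwLE (w : ℕ) : MGraph.tcwLE (Hw w).toMGraph (w + 1) := by
  classical
  refine ⟨Option (Fin w), inferInstance, starGraph w, starBags w,
    ⟨star_isTree w, ?_, ?_⟩, ?_, ?_⟩
  · intro t t' htt
    cases t with
    | none => exact Set.empty_disjoint _
    | some i =>
        cases t' with
        | none => exact Set.disjoint_empty _
        | some j =>
            have hij : i ≠ j := fun h => htt (h ▸ rfl)
            rw [Set.disjoint_left]
            rintro p (h1 : p.1 = i) (h2 : p.1 = j)
            exact hij (h1.symm.trans h2)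
  · show (⋃ t, starBags w t) = Set.univ
    refine Set.eq_univ_of_forall ?_
    intro p
    exact Set.mem_iUnion.mpr ⟨some p.1, rfl⟩
  · intro a b hab
    obtain ⟨hne, h0 | h0⟩ := star_adj.mp hab
    · subst h0
      obtain ⟨i, rfl⟩ := Option.ne_none_iff_exists'.mp (Ne.symm hne)
      exact cut_card_le i _ _ (Or.inr ⟨edgeSide_center i, edgeSide_leaf i⟩)
    · subst h0
      obtain ⟨i, rfl⟩ := Option.ne_none_iff_exists'.mp hne
      exact cut_card_le i _ _ (Or.inl ⟨edgeSide_leaf i, edgeSide_center i⟩)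
  · intro t H hctr
    have h1 := centerStep_verts_subset hctr.1
    have h2 : H.verts.ncard ≤
        (MGraph.torso (Hw w).toMGraph (_root_.starGraph w) (starBags w) t).verts.ncard :=
      Set.ncard_le_ncard h1 (Set.toFinite _)
    refine le_trans h2 (le_trans (torso_verts_ncard_le _ _ _ t) ?_)
    cases t with
    | none =>
        have e1 : (starBags w none).ncard = 0 := by
          simp [starBags]
        have e2 : {s | (_root_.starGraph w).Adj none s}.ncard ≤ w + 1 := by
          refine le_trans (Set.ncard_le_ncard (Set.subset_univ _) (Set.toFinite _)) ?_
          rw [Set.ncard_univ]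
          simp [Nat.card_eq_fintype_card]
        omega
    | some i =>
        have e1 : (starBags w (some i)).ncard = w := by
          have himg : (starBags w (some i)) = (fun j => ((i, j) : Fin w × Fin w)) '' Set.univ := by
            ext p
            constructor
            · intro hp
              exact ⟨p.2, trivial, Prod.ext (hp : p.1 = i).symm rfl⟩
            · rintro ⟨j, -, rfl⟩
              exact rfl
          rw [himg, Set.ncard_image_of_injective _
            (fun a b h => by simpa using congrArg Prod.snd h)]
          rw [Set.ncard_univ, Nat.card_eq_fintype_card, Fintype.card_fin]
        have e2 : {s | (_root_.starGraph w).Adj (some i) s}.ncard ≤ 1 := by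
          have hsub : {s | (_root_.starGraph w).Adj (some i) s} ⊆ {none} := by
            intro s hs
            obtain ⟨hne, h0 | h0⟩ := star_adj.mp hs
            · exact absurd h0 (Option.some_ne_none i)
            · exact h0
          refine le_trans (Set.ncard_le_ncard hsub (Set.toFinite _)) ?_
          simp
        omega

lemma hw_tcw_le (w : ℕ) : MGraph.tcw (Hw w).toMGraph ≤ w + 1 :=
  Nat.sInf_le (hw_tcwLE w)

end TCW
theorem exists_family_tw_quadratic_in_tcw :
    ∃ H : (w : ℕ) → SimpleGraph (Fin w × Fin w),
      ∀ w : ℕ, 1 ≤ w →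
        tcw (H w).toMGraph ≤ w + 1 ∧
        ∀ k : ℕ, twLE (H w) k → (w : ℝ) ^ 2 / 16 - 1 ≤ k := by
  refine ⟨Hw, fun w hw => ⟨hw_tcw_le w, ?_⟩⟩
  intro k hk
  by_cases hw2 : 2 ≤ w
  · obtain ⟨ι, hfin, T, Y, hdec, hbags⟩ := hk
    haveI : Finite ι := hfin
    obtain ⟨x, hx⟩ := bramble_hitting hdec (hw_bramble hw2)
    have hhit : ∀ (i : Fin w) (Z : Finset (Fin w)), i ∉ Z → Z.card = w / 2 →
        ((Y x) ∩ Bset w i Z).Nonempty := fun i Z h1 h2 => hx _ ⟨i, Z, h1, h2, rfl⟩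
    have hlow := bag_lower hw2 hhit
    have hb := hbags x
    have hnat : w * w ≤ 4 * (k + 1) := le_trans hlow (by omega)
    have hr : (w : ℝ) * w ≤ 4 * ((k : ℝ) + 1) := by exact_mod_cast hnat
    have hr2 : (w : ℝ) ^ 2 ≤ 4 * (k : ℝ) + 4 := by rw [sq]; linarith
    have hk0 : (0 : ℝ) ≤ (k : ℝ) := Nat.cast_nonneg k
    linarith
  · have hw1 : w = 1 := by omega
    subst hw1
    have h0 : ((1 : ℕ) : ℝ) ^ 2 / 16 - 1 ≤ 0 := by norm_num
    have hk0 : (0 : ℝ) ≤ (k : ℝ) := Nat.cast_nonneg k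
    linarith
end
end

section
/- Let G be a 3-edge-connected graph, w ≥ 2 an integer, and S ⊆ V(G) with |S| ≥ w + 1 and |δ_G(S, V(G)∖S)| ≤ 2w. If tcw(G) ≤ w, then there exists a non-trivial tree-cut decomposition (T, X) of G[S] such that: (1) T is a star with central node t_c and ℓ ≥ 1 leaves; (2) the internal width of (T, X) is at most w (all adhesions have size at most w, and the 3-center torso size at every non-leaf node is at most w); (3) |X_{t_c}| + ℓ ≤ w; and (4) for every leaf node t, Σ_{x ∈ ∂_G(S) ∩ X_t} |δ_G({x}, V(G)∖S)| ≤ w. -/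
open scoped Classical

noncomputable section
open scoped Classical
open MGraph

namespace StarAux

variable {V : Type}

/-! ### Basic center-step facts -/

lemma centerStep_verts_subset {X : Set V} {A B : MGraph V} (h : CenterStep X A B) :
    B.verts ⊆ A.verts := by
  rcases h with ⟨x, y, z, _, _, _, _, _, _, rfl⟩ | ⟨x, _, _, _, _, rfl⟩ <;>
    exact Set.diff_subset

lemma chain_verts_subset {X : Set V} {A B : MGraph V}
    (h : Relation.ReflTransGen (CenterStep X) A B) : B.verts ⊆ A.verts := by
  induction h with
  | refl => exact subset_rfl
  | tail _ hstep ih => exact (centerStep_verts_subset hstep).trans ih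

lemma filter_irrel {α : Type} (p : α → Prop) (h1 h2 : DecidablePred p) (s : Multiset α) :
    @Multiset.filter α p h1 s = @Multiset.filter α p h2 s := by
  rw [Subsingleton.elim h1 h2]

/-! ### 3-edge-connectivity: crossing edges -/

def cross (U : Set V) (e : Sym2 V) : Prop := ∃ a b, e = s(a, b) ∧ a ∈ U ∧ b ∉ U

lemma three_le_cross {G : MGraph V} (h3 : G.ThreeEdgeConnected) {U : Set V}
    (h1 : (U ∩ G.verts).Nonempty) (h2 : (G.verts \ U).Nonempty) :
    3 ≤ Multiset.card (G.edges.filter (fun e => cross U e)) := by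
  by_contra hlt
  push_neg at hlt
  set F := G.edges.filter (fun e => cross U e) with hF
  have hconn := h3.2 F (Multiset.filter_le _ _) (by omega)
  obtain ⟨u, huU, huV⟩ := h1
  obtain ⟨x, hxV, hxU⟩ := h2
  have hrem : G.edges - F = G.edges.filter (fun e => ¬ cross U e) := by
    have h := Multiset.filter_add_not (fun e => cross U e) G.edges
    calc G.edges - F = (F + G.edges.filter (fun e => ¬ cross U e)) - F := by
          rw [hF, h]
    _ = _ := add_tsub_cancel_left _ _
  have hreach := hconn.2 u huV x hxV
  have key : ∀ y, Relation.ReflTransGen (G.deleteEdges F).Adj u y → y ∈ U := by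
    intro y hy
    induction hy with
    | refl => exact huU
    | @tail b c _ hadj ih =>
      by_contra hc
      have hm : s(b, c) ∈ G.edges - F := hadj.2
      rw [hrem, Multiset.mem_filter] at hm
      exact hm.2 ⟨b, c, rfl, ih, hc⟩
  exact hxU (key x hreach)

/-! ### Tree lemmas -/

section Tree
variable {ι : Type} {T : SimpleGraph ι}

lemma del_comm (T : SimpleGraph ι) (a b : ι) :
    T.deleteEdges {s(a, b)} = T.deleteEdges {s(b, a)} := by
  rw [Sym2.eq_swap]

lemma tree_bridge (hT : T.IsTree) {a b : ι} (hab : T.Adj a b) :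
    ¬ (T.deleteEdges {s(a, b)}).Reachable a b := by
  have h := (SimpleGraph.isAcyclic_iff_forall_adj_isBridge.mp hT.2) hab
  rw [SimpleGraph.isBridge_iff] at h
  exact h

lemma side_cover (hT : T.IsTree) (a b t : ι) :
    (T.deleteEdges {s(a, b)}).Reachable a t ∨ (T.deleteEdges {s(a, b)}).Reachable b t := by
  obtain ⟨p⟩ := hT.1.preconnected a t
  suffices h : ∀ {x y : ι} (_ : T.Walk x y),
      ((T.deleteEdges {s(a, b)}).Reachable a x ∨ (T.deleteEdges {s(a, b)}).Reachable b x) →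
      ((T.deleteEdges {s(a, b)}).Reachable a y ∨ (T.deleteEdges {s(a, b)}).Reachable b y) by
    exact h p (Or.inl (SimpleGraph.Reachable.refl a))
  intro x y p
  induction p with
  | nil => exact id
  | @cons x' y' z' hadj q ih =>
    intro hx
    apply ih
    by_cases he : s(x', y') = s(a, b)
    · rw [Sym2.eq_iff] at he
      rcases he with ⟨_, rfl⟩ | ⟨_, rfl⟩
      · exact Or.inr (SimpleGraph.Reachable.refl _)
      · exact Or.inl (SimpleGraph.Reachable.refl _)
    · have hadj' : (T.deleteEdges {s(a, b)}).Adj x' y' := by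
        rw [SimpleGraph.deleteEdges_adj]
        exact ⟨hadj, by simpa using he⟩
      rcases hx with h | h
      · exact Or.inl (h.trans hadj'.reachable)
      · exact Or.inr (h.trans hadj'.reachable)

lemma side_disjoint (hT : T.IsTree) {a b t : ι} (hab : T.Adj a b)
    (h1 : (T.deleteEdges {s(a, b)}).Reachable a t)
    (h2 : (T.deleteEdges {s(a, b)}).Reachable b t) : False :=
  tree_bridge hT hab (h1.trans h2.symm)

lemma walk_support_to_induce {T' : SimpleGraph ι} (hle : T' ≤ T) {t₀ : ι} :
    ∀ {x y : ι} (p : T'.Walk x y), t₀ ∉ p.support →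
      ∃ (hx : x ∈ ({t₀}ᶜ : Set ι)) (hy : y ∈ ({t₀}ᶜ : Set ι)),
        (T.induce ({t₀}ᶜ : Set ι)).Reachable ⟨x, hx⟩ ⟨y, hy⟩ := by
  intro x y p
  induction p with
  | @nil u =>
    intro h
    have hx : u ∈ ({t₀}ᶜ : Set ι) := by simpa [eq_comm] using h
    exact ⟨hx, hx, SimpleGraph.Reachable.refl _⟩
  | @cons x' y' z' hadj q ih =>
    intro h
    rw [SimpleGraph.Walk.support_cons, List.mem_cons] at h
    push_neg at h
    obtain ⟨hy, hz, hr⟩ := ih h.2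
    have hx : x' ∈ ({t₀}ᶜ : Set ι) := by simpa [eq_comm] using h.1
    have hadj' : (T.induce ({t₀}ᶜ : Set ι)).Adj ⟨x', hx⟩ ⟨y', hy⟩ := hle hadj
    exact ⟨hx, hz, hadj'.reachable.trans hr⟩

lemma induce_reach_to_walk {A : Set ι} {x y : ↥A}
    (h : (T.induce A).Reachable x y) :
    ∃ p : T.Walk x.1 y.1, ∀ v ∈ p.support, v ∈ A := by
  obtain ⟨p⟩ := h
  induction p with
  | @nil u => exact ⟨SimpleGraph.Walk.nil, by rintro v hv; simp at hv; subst hv; exact u.2⟩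
  | @cons x' y' z' hadj q ih =>
    obtain ⟨p', hp'⟩ := ih
    have hadj'' : T.Adj x'.1 y'.1 := hadj
    refine ⟨SimpleGraph.Walk.cons hadj'' p', ?_⟩
    intro v hv
    rw [SimpleGraph.Walk.support_cons, List.mem_cons] at hv
    rcases hv with rfl | hv
    · exact x'.2
    · exact hp' v hv

lemma reachAvoid_iff_side (hT : T.IsTree) {t₀ s : ι} (hadj : T.Adj t₀ s) (t' : ι) :
    ReachAvoid T t₀ s t' ↔ (T.deleteEdges {s(s, t₀)}).Reachable s t' := by
  constructor
  · rintro ⟨hs, ht, hr⟩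
    obtain ⟨p, hp⟩ := induce_reach_to_walk hr
    have ht₀ : t₀ ∉ p.support := fun h => (hp _ h) rfl
    refine ⟨p.toDeleteEdges _ ?_⟩
    intro e he hmem
    rw [Set.mem_singleton_iff] at hmem
    subst hmem
    exact ht₀ (p.snd_mem_support_of_mem_edges he)
  · rintro ⟨q⟩
    have ht₀ : t₀ ∉ q.support := by
      intro hmem
      have : (T.deleteEdges {s(s, t₀)}).Reachable s t₀ := ⟨q.takeUntil t₀ hmem⟩
      rw [← del_comm] at this
      exact tree_bridge hT hadj this.symm
    obtain ⟨hx, hy, hr⟩ := walk_support_to_induce (T.deleteEdges_le (s := {s(s, t₀)})) q ht₀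
    exact ⟨hx, hy, hr⟩

lemma reachAvoid_unique (hT : T.IsTree) {t₀ s s' t' : ι} (h1 : T.Adj t₀ s) (h2 : T.Adj t₀ s')
    (r1 : ReachAvoid T t₀ s t') (r2 : ReachAvoid T t₀ s' t') : s = s' := by
  by_contra hne
  obtain ⟨hs, ht, hr1⟩ := r1
  obtain ⟨hs', ht', hr2⟩ := r2
  have hr : (T.induce ({t₀}ᶜ : Set ι)).Reachable ⟨s, hs⟩ ⟨s', hs'⟩ := hr1.trans hr2.symm
  obtain ⟨q, hq⟩ := induce_reach_to_walk hr
  have hq0 : t₀ ∉ q.support := fun h => (hq _ h) rfl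
  have hpath2 : (SimpleGraph.Walk.cons h1 q.bypass).IsPath := by
    rw [SimpleGraph.Walk.cons_isPath_iff]
    exact ⟨q.bypass_isPath, fun h => hq0 (q.support_bypass_subset h)⟩
  have hpath1 : (SimpleGraph.Walk.cons h2 SimpleGraph.Walk.nil).IsPath := by
    rw [SimpleGraph.Walk.cons_isPath_iff]
    refine ⟨SimpleGraph.Walk.IsPath.nil, ?_⟩
    simp [h2.ne]
  obtain ⟨p, _, hun⟩ := hT.existsUnique_path t₀ s'
  have heq := (hun _ hpath1).trans (hun _ hpath2).symm
  have hsup := congrArg SimpleGraph.Walk.support heq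
  rw [SimpleGraph.Walk.support_cons, SimpleGraph.Walk.support_cons,
    SimpleGraph.Walk.support_nil, SimpleGraph.Walk.support_eq_cons q.bypass] at hsup
  simp only [List.cons.injEq] at hsup
  exact hne hsup.2.1.symm

lemma exists_first_step (hT : T.IsTree) {t₀ t' : ι} (hne : t' ≠ t₀) :
    ∃ s, T.Adj t₀ s ∧ (T.deleteEdges {s(s, t₀)}).Reachable s t' := by
  obtain ⟨w⟩ := hT.1.preconnected t₀ t'
  have hp : w.bypass.IsPath := SimpleGraph.Walk.bypass_isPath w
  set p := w.bypass with hpdef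
  clear_value p
  cases p with
  | nil => exact absurd rfl hne
  | @cons _ s _ hadj q =>
    rw [SimpleGraph.Walk.cons_isPath_iff] at hp
    refine ⟨s, hadj, ?_⟩
    refine ⟨q.toDeleteEdges _ ?_⟩
    intro e he hmem
    rw [Set.mem_singleton_iff] at hmem
    subst hmem
    exact hp.2 (q.snd_mem_support_of_mem_edges he)

lemma dist_side (hT : T.IsTree) {x y t' : ι} (hadj : T.Adj x y)
    (ht' : (T.deleteEdges {s(x, y)}).Reachable y t') :
    T.dist x t' = T.dist y t' + 1 := by
  have hconn := hT.1
  apply le_antisymm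
  · calc T.dist x t' ≤ T.dist x y + T.dist y t' := hconn.dist_triangle
    _ = 1 + T.dist y t' := by rw [SimpleGraph.dist_eq_one_iff_adj.mpr hadj]
    _ = T.dist y t' + 1 := by omega
  · obtain ⟨p, hlen⟩ := hconn.exists_walk_length_eq_dist x t'
    have hy : y ∈ p.support := by
      by_contra hy
      have hne : ∀ e ∈ p.edges, e ∉ ({s(x, y)} : Set (Sym2 ι)) := by
        intro e he hmem
        rw [Set.mem_singleton_iff] at hmem
        subst hmem
        exact hy (p.snd_mem_support_of_mem_edges he)
      have : (T.deleteEdges {s(x, y)}).Reachable x t' := ⟨p.toDeleteEdges _ hne⟩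
      exact side_disjoint hT hadj this ht'
    have h1 : 1 ≤ (p.takeUntil y hy).length := by
      by_contra h0
      push_neg at h0
      have : x = y := SimpleGraph.Walk.eq_of_length_eq_zero (p := p.takeUntil y hy) (by omega)
      exact hadj.ne this
    have h2 : T.dist y t' ≤ (p.dropUntil y hy).length := SimpleGraph.dist_le _
    have h3 : (p.takeUntil y hy).length + (p.dropUntil y hy).length = p.length := by
      rw [← SimpleGraph.Walk.length_append, SimpleGraph.Walk.take_spec]
    omega

end Tree
/-! ### Star graph lemmas -/

section Star
variable {ℓ : ℕ}

lemma star_adj {a b : Option (Fin ℓ)} :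
    (starGraph ℓ).Adj a b ↔ a ≠ b ∧ (a = none ∨ b = none) := by
  unfold starGraph
  rw [SimpleGraph.fromRel_adj]

lemma star_reach_none (a : Option (Fin ℓ)) : (starGraph ℓ).Reachable a none := by
  cases a with
  | none => exact SimpleGraph.Reachable.refl _
  | some i => exact (star_adj.mpr ⟨by simp, Or.inr rfl⟩).reachable

lemma star_del_step {i : Fin ℓ} {t : Option (Fin ℓ)}
    (h : ((starGraph ℓ).deleteEdges {s(some i, none)}).Reachable (some i) t) : t = some i := by
  obtain ⟨p⟩ := h
  cases p with
  | nil => rfl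
  | @cons _ y _ hadj q =>
    exfalso
    rw [SimpleGraph.deleteEdges_adj] at hadj
    obtain ⟨hadj1, hadj2⟩ := hadj
    rw [star_adj] at hadj1
    rcases hadj1.2 with h | h
    · simp at h
    · subst h
      exact hadj2 rfl

lemma star_isTree : (starGraph ℓ).IsTree := by
  constructor
  · rw [SimpleGraph.connected_iff]
    exact ⟨fun a b => (star_reach_none a).trans (star_reach_none b).symm, ⟨none⟩⟩
  · rw [SimpleGraph.isAcyclic_iff_forall_adj_isBridge]
    intro v w hadj
    rw [SimpleGraph.isBridge_iff]
    have hvw := (star_adj.mp hadj)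
    rcases hvw.2 with rfl | rfl
    · cases w with
      | none => exact absurd rfl hvw.1
      | some i =>
        intro hr
        have : (starGraph ℓ).deleteEdges {s(none, some i)}
            = (starGraph ℓ).deleteEdges {s(some i, none)} := del_comm _ _ _
        rw [this] at hr
        exact by simpa using star_del_step hr.symm
    · cases v with
      | none => exact absurd rfl hvw.1
      | some i =>
        intro hr
        exact by simpa using star_del_step hr

lemma star_edgeSide_leaf {V : Type} (X : Option (Fin ℓ) → Set V) (i : Fin ℓ) :
    edgeSide (starGraph ℓ) X (some i) none = X (some i) := by
  apply subset_antisymm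
  · refine Set.iUnion₂_subset ?_
    intro t ht
    rw [star_del_step ht]
  · intro v hv
    exact Set.mem_biUnion (SimpleGraph.Reachable.refl _) hv

end Star

/-! ### cut monotonicity and finsum helpers -/

lemma cut_mono {V : Type} {G G' : MGraph V} {A B A' B' : Set V} (hE : G.edges ≤ G'.edges)
    (hA : A ⊆ A') (hB : B ⊆ B') : G.cut A B ≤ G'.cut A' B' := by
  unfold MGraph.cut
  calc G.edges.filter (fun e => ∃ a ∈ A, ∃ b ∈ B, e = s(a, b))
      ≤ G'.edges.filter (fun e => ∃ a ∈ A, ∃ b ∈ B, e = s(a, b)) :=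
        Multiset.filter_le_filter _ hE
    _ ≤ G'.edges.filter (fun e => ∃ a ∈ A', ∃ b ∈ B', e = s(a, b)) := by
        apply Multiset.monotone_filter_right
        rintro e ⟨a, ha, b, hb, rfl⟩
        exact ⟨a, hA ha, b, hB hb, rfl⟩

lemma finsum_mem_le_finsum_mem {V : Type} {A A' : Set V} (h : A ⊆ A') (hA' : A'.Finite)
    (f : V → ℕ) : (∑ᶠ x ∈ A, f x) ≤ ∑ᶠ x ∈ A', f x := by
  rw [finsum_mem_eq_finite_toFinset_sum f (hA'.subset h), finsum_mem_eq_finite_toFinset_sum f hA']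
  apply Finset.sum_le_sum_of_subset
  intro x hx
  simp only [Set.Finite.mem_toFinset] at hx ⊢
  exact h hx

/-! ### From `tcw G ≤ w` to an actual decomposition -/

lemma tcwLE_mono {V : Type} {G : MGraph V} {a b : ℕ} (h : tcwLE G a) (hab : a ≤ b) :
    tcwLE G b := by
  obtain ⟨ι, hι, T, X, hTCD, h1, h2⟩ := h
  exact ⟨ι, hι, T, X, hTCD, fun x y hxy => (h1 x y hxy).trans hab,
    fun t H hH => (h2 t H hH).trans hab⟩

lemma tcwLE_card {V : Type} (G : MGraph V) (hfin : G.verts.Finite) :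
    tcwLE G G.verts.ncard := by
  refine ⟨PUnit, inferInstance, ⊥, fun _ => G.verts, ⟨?_, ?_, ?_⟩, ?_, ?_⟩
  · constructor
    · rw [SimpleGraph.connected_iff]
      exact ⟨fun a b => by rw [Subsingleton.elim a b], ⟨PUnit.unit⟩⟩
    · intro v c hc
      cases c with
      | nil => exact hc.ne_nil rfl
      | cons hadj q => exact hadj.elim
  · intro t t' htt'
    exact absurd (Subsingleton.elim t t') htt'
  · exact Set.iUnion_const _
  · intro a b hab
    exact absurd hab (by simp)
  · intro t H hH
    have hsub : H.verts ⊆ (torso G ⊥ (fun _ => G.verts) t).verts := chain_verts_subset hH.1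
    have hverts : (torso G ⊥ (fun _ => G.verts) t).verts = Sum.inl '' G.verts := by
      show Sum.inl '' G.verts ∪ Sum.inr '' {s | (⊥ : SimpleGraph PUnit).Adj t s ∧ _} = _
      have : {s | (⊥ : SimpleGraph PUnit).Adj t s ∧
          ∃ t' v, v ∈ G.verts ∧ ReachAvoid (⊥ : SimpleGraph PUnit) t s t'} = ∅ := by
        ext s; simp
      rw [this]
      simp
    rw [hverts] at hsub
    calc H.verts.ncard ≤ (Sum.inl '' G.verts).ncard :=
          Set.ncard_le_ncard hsub (hfin.image _)
    _ = G.verts.ncard := Set.ncard_image_of_injective _ Sum.inl_injective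

lemma tcwLE_of_tcw_le {V : Type} (G : MGraph V) (hfin : G.verts.Finite) {w : ℕ}
    (h : tcw G ≤ w) : tcwLE G w := by
  have hne : {n | tcwLE G n}.Nonempty := ⟨_, tcwLE_card G hfin⟩
  have := Nat.sInf_mem hne
  exact tcwLE_mono this h
/-! ### Counting lemmas -/

lemma sum_card_filter_le {α β : Type} (M : Multiset β) (t : Finset α) (p : α → β → Prop)
    (hdisj : ∀ a ∈ t, ∀ b ∈ t, a ≠ b → ∀ e, ¬(p a e ∧ p b e)) :
    (∑ a ∈ t, Multiset.card (M.filter (fun e => p a e)))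
      ≤ Multiset.card (M.filter (fun e => ∃ a ∈ t, p a e)) := by
  classical
  induction t using Finset.induction_on with
  | empty => simp
  | @insert a t ha ih =>
    rw [Finset.sum_insert ha]
    have hd : ∀ e, ¬(p a e ∧ ∃ b ∈ t, p b e) := by
      rintro e ⟨hpa, b, hb, hpb⟩
      exact hdisj a (Finset.mem_insert_self a t) b (Finset.mem_insert_of_mem hb)
        (by rintro rfl; exact ha hb) e ⟨hpa, hpb⟩
    have ih' := ih (fun x hx y hy =>
      hdisj x (Finset.mem_insert_of_mem hx) y (Finset.mem_insert_of_mem hy))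
    have hzero : M.filter (fun e => p a e ∧ ∃ b ∈ t, p b e) = 0 := by
      rw [Multiset.filter_eq_nil]
      exact fun e _ h => hd e h
    have hsplit := Multiset.filter_add_filter (fun e => p a e) (fun e => ∃ b ∈ t, p b e) M
    rw [hzero, add_zero] at hsplit
    have hcard : Multiset.card (M.filter (fun e => p a e))
        + Multiset.card (M.filter (fun e => ∃ b ∈ t, p b e))
        = Multiset.card (M.filter (fun e => p a e ∨ ∃ b ∈ t, p b e)) := by
      rw [← Multiset.card_add, hsplit]
    have hcongr : M.filter (fun e => ∃ b ∈ insert a t, p b e)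
        = M.filter (fun e => p a e ∨ ∃ b ∈ t, p b e) := by
      apply Multiset.filter_congr
      intro e _
      simp only [Finset.mem_insert, eq_iff_iff]
      constructor
      · rintro ⟨b, rfl | hb, hpb⟩
        · exact Or.inl hpb
        · exact Or.inr ⟨b, hb, hpb⟩
      · rintro (hpa | ⟨b, hb, hpb⟩)
        · exact ⟨a, Or.inl rfl, hpa⟩
        · exact ⟨b, Or.inr hb, hpb⟩
    rw [hcongr, ← hcard]
    omega

lemma total_gamma_le {V : Type} (G : MGraph V) (S A : Set V) (hA : A.Finite) :
    (∑ᶠ v ∈ A, G.gammaExt S v) ≤ Multiset.card (G.cut S (G.verts \ S)) := by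
  classical
  rw [finsum_mem_eq_finite_toFinset_sum _ hA]
  have hsum : ∑ v ∈ hA.toFinset, G.gammaExt S v
      = ∑ v ∈ hA.toFinset.filter (fun v => v ∈ S),
          Multiset.card (G.edges.filter (fun e => ∃ u, u ∈ G.verts ∧ u ∉ S ∧ e = s(v, u))) := by
    rw [Finset.sum_filter]
    apply Finset.sum_congr rfl
    intro v _
    unfold MGraph.gammaExt MGraph.bWeight
    split <;> rfl
  rw [hsum]
  calc _ ≤ Multiset.card (G.edges.filter (fun e => ∃ v ∈ hA.toFinset.filter (fun v => v ∈ S),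
          ∃ u, u ∈ G.verts ∧ u ∉ S ∧ e = s(v, u))) := by
        apply sum_card_filter_le
        rintro a hamem b hbmem hab e ⟨⟨u, _, huS, rfl⟩, ⟨u', _, hu'S, heq⟩⟩
        rw [Finset.mem_filter] at hamem hbmem
        rw [Sym2.eq_iff] at heq
        rcases heq with ⟨rfl, rfl⟩ | ⟨rfl, rfl⟩
        · exact hab rfl
        · exact hu'S hamem.2
    _ ≤ _ := by
        apply Multiset.card_le_card
        apply Multiset.monotone_filter_right
        rintro e ⟨v, hv, u, huV, huS, rfl⟩
        rw [Finset.mem_filter] at hv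
        exact ⟨v, hv.2, u, ⟨huV, huS⟩, rfl⟩

/-! ### Side sums and potentials on the tree -/

section Sides
variable {ι : Type} [Fintype ι] {T : SimpleGraph ι}

lemma sides_sum (hT : T.IsTree) {x y : ι} (hadj : T.Adj x y) (f : ι → ℕ) :
    (∑ᶠ t ∈ {t | (T.deleteEdges {s(x, y)}).Reachable x t}, f t)
      + (∑ᶠ t ∈ {t | (T.deleteEdges {s(x, y)}).Reachable y t}, f t) = ∑ t : ι, f t := by
  classical
  rw [finsum_mem_eq_finite_toFinset_sum f (Set.toFinite _),
    finsum_mem_eq_finite_toFinset_sum f (Set.toFinite _), ← Finset.sum_union]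
  · apply Finset.sum_congr _ (fun _ _ => rfl)
    apply Finset.eq_univ_of_forall
    intro t
    rw [Finset.mem_union, Set.Finite.mem_toFinset, Set.Finite.mem_toFinset]
    exact side_cover hT x y t
  · rw [Finset.disjoint_left]
    intro t h1 h2
    rw [Set.Finite.mem_toFinset] at h1 h2
    exact side_disjoint hT hadj h1 h2

lemma dist_bound (hT : T.IsTree) (t t' : ι) : T.dist t t' ≤ Fintype.card ι := by
  obtain ⟨p⟩ := hT.1.preconnected t t'
  exact (SimpleGraph.dist_le p.bypass).trans p.bypass_isPath.length_lt.le

lemma pot_identity (hT : T.IsTree) {x y : ι} (hadj : T.Adj x y) (f : ι → ℕ) :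
    (∑ t : ι, f t * T.dist x t) + (∑ᶠ t ∈ {t | (T.deleteEdges {s(x, y)}).Reachable x t}, f t)
      = (∑ t : ι, f t * T.dist y t)
        + (∑ᶠ t ∈ {t | (T.deleteEdges {s(x, y)}).Reachable y t}, f t) := by
  classical
  set Fx := (Set.toFinite {t | (T.deleteEdges {s(x, y)}).Reachable x t}).toFinset with hFx
  set Fy := (Set.toFinite {t | (T.deleteEdges {s(x, y)}).Reachable y t}).toFinset with hFy
  have hdis : Disjoint Fx Fy := by
    rw [Finset.disjoint_left]
    intro t h1 h2
    rw [hFx, Set.Finite.mem_toFinset] at h1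
    rw [hFy, Set.Finite.mem_toFinset] at h2
    exact side_disjoint hT hadj h1 h2
  have huniv : Fx ∪ Fy = Finset.univ := by
    apply Finset.eq_univ_of_forall
    intro t
    rw [Finset.mem_union, hFx, hFy, Set.Finite.mem_toFinset, Set.Finite.mem_toFinset]
    exact side_cover hT x y t
  rw [finsum_mem_eq_finite_toFinset_sum f (Set.toFinite _),
    finsum_mem_eq_finite_toFinset_sum f (Set.toFinite _), ← hFx, ← hFy]
  have hx : ∀ g : ι → ℕ, ∑ t : ι, g t = ∑ t ∈ Fx, g t + ∑ t ∈ Fy, g t := by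
    intro g
    rw [← Finset.sum_union hdis, huniv]
  rw [hx (fun t => f t * T.dist x t), hx (fun t => f t * T.dist y t)]
  have hdy : ∑ t ∈ Fy, f t * T.dist x t = ∑ t ∈ Fy, (f t * T.dist y t + f t) := by
    apply Finset.sum_congr rfl
    intro t ht
    rw [hFy, Set.Finite.mem_toFinset] at ht
    rw [dist_side hT hadj ht]
    ring
  have hdx : ∑ t ∈ Fx, f t * T.dist y t = ∑ t ∈ Fx, (f t * T.dist x t + f t) := by
    apply Finset.sum_congr rfl
    intro t ht
    rw [hFx, Set.Finite.mem_toFinset] at ht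
    have ht' : (T.deleteEdges {s(y, x)}).Reachable x t := by rw [← del_comm]; exact ht
    rw [dist_side hT hadj.symm ht']
    ring
  rw [hdy, hdx, Finset.sum_add_distrib, Finset.sum_add_distrib]
  omega

end Sides
/-! ### Sink existence -/

lemma exists_sink {V ι : Type} [Fintype ι] (G : MGraph V) (T : SimpleGraph ι) (X : ι → Set V)
    (S : Set V) (w : ℕ) (hT : T.IsTree) (hfin : G.verts.Finite) (hSsub : S ⊆ G.verts)
    (hSne : S.Nonempty)
    (hdisj : Pairwise fun t t' => Disjoint (X t) (X t')) (hcover : (⋃ t, X t) = G.verts)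
    (htot : (∑ᶠ v ∈ G.verts, G.gammaExt S v) ≤ 2 * w) :
    ∃ t₀ : ι, ∀ s, T.Adj t₀ s → ¬ ruleOrient G T X S w t₀ s := by
  classical
  have hbagfin : ∀ t, (X t).Finite := fun t =>
    hfin.subset (hcover ▸ Set.subset_iUnion X t)
  set γbag : ι → ℕ := fun t => ∑ᶠ v ∈ X t, G.gammaExt S v with hγbag
  set bagS : ι → ℕ := fun t => (S ∩ X t).ncard with hbagS
  set pot1 : ι → ℕ := fun t => ∑ t' : ι, γbag t' * T.dist t t' with hpot1
  set pot2 : ι → ℕ := fun t => ∑ t' : ι, bagS t' * T.dist t t' with hpot2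
  set M : ℕ := (∑ t' : ι, bagS t') * Fintype.card ι with hM
  have hpot2le : ∀ t, pot2 t ≤ M := by
    intro t
    rw [hpot2, hM, Finset.sum_mul]
    apply Finset.sum_le_sum
    intro t' _
    exact Nat.mul_le_mul_left _ (dist_bound hT t t')
  set pot : ι → ℕ := fun t => pot1 t * (M + 1) + pot2 t with hpot
  have : Nonempty ι := hT.1.nonempty
  obtain ⟨t₀, -, hmin⟩ := Finset.exists_min_image Finset.univ pot ⟨Classical.arbitrary ι,
    Finset.mem_univ _⟩
  refine ⟨t₀, fun s hadj hrule => ?_⟩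
  have hmins := hmin s (Finset.mem_univ s)
  -- common notation
  have hid1 := pot_identity hT hadj γbag
  have hid2 := pot_identity hT hadj bagS
  have htotal : (∑ᶠ t ∈ {t | (T.deleteEdges {s(t₀, s)}).Reachable t₀ t}, γbag t)
      + (∑ᶠ t ∈ {t | (T.deleteEdges {s(t₀, s)}).Reachable s t}, γbag t) ≤ 2 * w := by
    rw [sides_sum hT hadj γbag]
    have hbi : (∑ᶠ t ∈ (Set.univ : Set ι), γbag t)
        = ∑ᶠ v ∈ ⋃ t ∈ (Set.univ : Set ι), X t, G.gammaExt S v :=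
      (finsum_mem_biUnion (fun a _ b _ hab => hdisj hab) Set.finite_univ
        (fun t _ => hbagfin t)).symm
    have huniv : (⋃ t ∈ (Set.univ : Set ι), X t) = G.verts := by
      rw [← hcover]; simp
    rw [huniv] at hbi
    calc ∑ t : ι, γbag t = ∑ᶠ t ∈ (Set.univ : Set ι), γbag t := by
          rw [finsum_mem_univ, finsum_eq_sum_of_fintype]
    _ = ∑ᶠ v ∈ G.verts, G.gammaExt S v := hbi
    _ ≤ 2 * w := htot
  rcases hrule with hrule1 | hrule2
  · -- Rule 1 : w < weight of s-side
    have hWY : w < ∑ᶠ t ∈ {t | (T.deleteEdges {s(t₀, s)}).Reachable s t}, γbag t := hrule1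
    have h1 : pot1 s + 1 ≤ pot1 t₀ := by
      show (∑ t : ι, γbag t * T.dist s t) + 1 ≤ ∑ t : ι, γbag t * T.dist t₀ t
      omega
    have h2 : pot2 s ≤ M := hpot2le s
    have hlt : pot s < pot t₀ := by
      calc pot s = pot1 s * (M + 1) + pot2 s := rfl
      _ < pot1 s * (M + 1) + (M + 1) := Nat.add_lt_add_left (by omega) _
      _ = (pot1 s + 1) * (M + 1) := by ring
      _ ≤ pot1 t₀ * (M + 1) := Nat.mul_le_mul_right _ h1
      _ ≤ pot1 t₀ * (M + 1) + pot2 t₀ := Nat.le_add_right _ _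
      _ = pot t₀ := rfl
    exact absurd hmins (not_le.mpr hlt)
  · -- Rule 2 : S misses the t₀-side
    have hzero : ∀ t ∈ {t | (T.deleteEdges {s(t₀, s)}).Reachable t₀ t}, S ∩ X t = ∅ := by
      intro t ht
      have hsub : X t ⊆ edgeSide T X t₀ s := Set.subset_biUnion_of_mem ht
      rw [← Set.subset_empty_iff, ← hrule2]
      exact fun v hv => ⟨hv.1, hsub hv.2⟩
    have hγzero : ∀ t ∈ {t | (T.deleteEdges {s(t₀, s)}).Reachable t₀ t}, γbag t = 0 := by
      intro t ht
      rw [hγbag]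
      apply finsum_mem_of_eqOn_zero
      intro v hv
      have hvS : v ∉ S := by
        intro hvS
        have : v ∈ S ∩ X t := ⟨hvS, hv⟩
        rw [hzero t ht] at this
        exact this
      simp [MGraph.gammaExt, hvS]
    have hSzero : ∀ t ∈ {t | (T.deleteEdges {s(t₀, s)}).Reachable t₀ t}, bagS t = 0 := by
      intro t ht
      rw [hbagS]
      simp only
      rw [hzero t ht]
      exact Set.ncard_empty V
    have hWX : (∑ᶠ t ∈ {t | (T.deleteEdges {s(t₀, s)}).Reachable t₀ t}, γbag t) = 0 :=
      finsum_mem_of_eqOn_zero hγzero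
    have hWSX : (∑ᶠ t ∈ {t | (T.deleteEdges {s(t₀, s)}).Reachable t₀ t}, bagS t) = 0 :=
      finsum_mem_of_eqOn_zero hSzero
    -- the s-side contains an S-vertex
    obtain ⟨v, hvS⟩ := hSne
    have hvV : v ∈ G.verts := hSsub hvS
    rw [← hcover] at hvV
    obtain ⟨Xt, ⟨t'', rfl⟩, hvX⟩ := hvV
    have ht'' : t'' ∈ {t | (T.deleteEdges {s(t₀, s)}).Reachable s t} := by
      rcases side_cover hT t₀ s t'' with h | h
      · exfalso
        have : v ∈ S ∩ X t'' := ⟨hvS, hvX⟩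
        rw [hzero t'' h] at this
        exact this
      · exact h
    have hWSY : 1 ≤ ∑ᶠ t ∈ {t | (T.deleteEdges {s(t₀, s)}).Reachable s t}, bagS t := by
      rw [finsum_mem_eq_finite_toFinset_sum _ (Set.toFinite _)]
      have hmem : t'' ∈ (Set.toFinite {t | (T.deleteEdges {s(t₀, s)}).Reachable s t}).toFinset := by
        rw [Set.Finite.mem_toFinset]; exact ht''
      calc 1 ≤ bagS t'' := by
            rw [hbagS]
            have : (S ∩ X t'').Nonempty := ⟨v, hvS, hvX⟩
            exact (Set.ncard_pos ((hbagfin t'').inter_of_right S)).mpr this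
      _ ≤ _ := Finset.single_le_sum (fun _ _ => Nat.zero_le _) hmem
    have h1 : pot1 s ≤ pot1 t₀ := by
      show (∑ t : ι, γbag t * T.dist s t) ≤ ∑ t : ι, γbag t * T.dist t₀ t
      omega
    have h2 : pot2 s < pot2 t₀ := by
      show (∑ t : ι, bagS t * T.dist s t) < ∑ t : ι, bagS t * T.dist t₀ t
      omega
    have hlt : pot s < pot t₀ := by
      calc pot s = pot1 s * (M + 1) + pot2 s := rfl
      _ ≤ pot1 t₀ * (M + 1) + pot2 s := Nat.add_le_add_right (Nat.mul_le_mul_right _ h1) _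
      _ < pot1 t₀ * (M + 1) + pot2 t₀ := Nat.add_lt_add_left h2 _
      _ = pot t₀ := rfl
    exact absurd hmins (not_le.mpr hlt)
/-! ### Torso analysis at a node -/

section Torso
variable {V ι : Type} [Fintype ι]

lemma torsoMap_side (G : MGraph V) (T : SimpleGraph ι) (X : ι → Set V) (hT : T.IsTree)
    (hdisj : Pairwise fun t t' => Disjoint (X t) (X t')) {t₀ s : ι} (hadj : T.Adj t₀ s)
    {v : V} (hv : v ∈ edgeSide T X s t₀) :
    torsoMap T X t₀ v = Sum.inr s := by
  obtain ⟨Xt, ⟨t₁, rfl⟩, hmem⟩ := hv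
  simp only [Set.mem_iUnion] at hmem
  obtain ⟨ht₁, hvX⟩ := hmem
  have ht₁' : (T.deleteEdges {s(s, t₀)}).Reachable s t₁ := ht₁
  have hne : t₁ ≠ t₀ := by
    intro h
    rw [h, del_comm T s t₀] at ht₁'
    exact tree_bridge hT hadj ht₁'.symm
  have hvnot : v ∉ X t₀ := by
    intro hv0
    exact Set.disjoint_left.mp (hdisj hne) hvX hv0
  unfold torsoMap
  rw [if_neg hvnot]
  have hra : ReachAvoid T t₀ s t₁ := (reachAvoid_iff_side hT hadj t₁).mpr ht₁'
  have hex : ∃ s', T.Adj t₀ s' ∧ ∃ t', v ∈ X t' ∧ ReachAvoid T t₀ s' t' :=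
    ⟨s, hadj, t₁, hvX, hra⟩
  unfold compOf
  rw [dif_pos hex]
  obtain ⟨hadj₁, t₂, hvX₂, hra₂⟩ := hex.choose_spec
  have ht₂ : t₂ = t₁ := by
    by_contra hne'
    exact Set.disjoint_left.mp (hdisj hne') hvX₂ hvX
  subst ht₂
  rw [reachAvoid_unique hT hadj₁ hadj hra₂ hra]

lemma torsoMap_nonside (G : MGraph V) (T : SimpleGraph ι) (X : ι → Set V) (hT : T.IsTree)
    (hdisj : Pairwise fun t t' => Disjoint (X t) (X t')) {t₀ s : ι} (hadj : T.Adj t₀ s)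
    {u : V} (hu : u ∉ edgeSide T X s t₀) :
    torsoMap T X t₀ u ≠ Sum.inr s := by
  unfold torsoMap
  split
  · simp
  · unfold compOf
    split
    · rename_i hex
      obtain ⟨hadj₁, t₂, huX₂, hra₂⟩ := hex.choose_spec
      intro hcon
      rw [Sum.inr.injEq] at hcon
      rw [hcon] at hra₂
      have ht₂ : (T.deleteEdges {s(s, t₀)}).Reachable s t₂ :=
        (reachAvoid_iff_side hT hadj t₂).mp hra₂
      exact hu (Set.mem_biUnion ht₂ huX₂)
    · intro hcon
      rw [Sum.inr.injEq] at hcon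
      exact hadj.ne hcon

lemma torso_degree_ge (G : MGraph V) (T : SimpleGraph ι) (X : ι → Set V) (w : ℕ)
    (hT : T.IsTree) (h3 : G.ThreeEdgeConnected)
    (hdisj : Pairwise fun t t' => Disjoint (X t) (X t')) (hcover : (⋃ t, X t) = G.verts)
    {t₀ s : ι} (hadj : T.Adj t₀ s)
    (hwit : ∃ t' v, v ∈ X t' ∧ ReachAvoid T t₀ s t')
    (hout : (G.verts \ edgeSide T X s t₀).Nonempty) :
    3 ≤ (torso G T X t₀).degree (Sum.inr s) := by
  classical
  unfold MGraph.degree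
  set U := edgeSide T X s t₀ with hU
  have hin : (U ∩ G.verts).Nonempty := by
    obtain ⟨t', v, hvX, hra⟩ := hwit
    have ht' : (T.deleteEdges {s(s, t₀)}).Reachable s t' :=
      (reachAvoid_iff_side hT hadj t').mp hra
    have hvU : v ∈ U := Set.mem_biUnion ht' hvX
    have hvV : v ∈ G.verts := by
      rw [← hcover]; exact Set.mem_iUnion.mpr ⟨t', hvX⟩
    exact ⟨v, hvU, hvV⟩
  have hcr := three_le_cross h3 hin hout
  set C := G.edges.filter (fun e => cross U e) with hC
  have hmapped : C.map (Sym2.map (torsoMap T X t₀)) ≤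
      ((torso G T X t₀).edges.filter (fun e => Sum.inr s ∈ e)) := by
    rw [Multiset.le_filter]
    constructor
    · show C.map (Sym2.map (torsoMap T X t₀)) ≤ (G.edges.map (Sym2.map (torsoMap T X t₀))).filter (fun e => ¬ e.IsDiag)
      rw [Multiset.le_filter]
      constructor
      · exact Multiset.map_le_map (Multiset.filter_le _ _)
      · intro e he
        rw [Multiset.mem_map] at he
        obtain ⟨e₀, he₀, rfl⟩ := he
        rw [hC, Multiset.mem_filter] at he₀
        obtain ⟨-, a, b, rfl, haU, hbU⟩ := he₀
        rw [Sym2.map_pair_eq, Sym2.mk_isDiag_iff]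
        rw [torsoMap_side G T X hT hdisj hadj haU]
        exact fun h => torsoMap_nonside G T X hT hdisj hadj hbU h.symm
    · intro e he
      rw [Multiset.mem_map] at he
      obtain ⟨e₀, he₀, rfl⟩ := he
      rw [hC, Multiset.mem_filter] at he₀
      obtain ⟨-, a, b, rfl, haU, hbU⟩ := he₀
      rw [Sym2.map_pair_eq, Sym2.mem_iff]
      left
      exact (torsoMap_side G T X hT hdisj hadj haU).symm
  have hmono := Multiset.card_le_card hmapped
  rw [Multiset.card_map] at hmono
  refine hcr.trans (hmono.trans (le_of_eq ?_))
  congr 1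
  exact filter_irrel _ _ _ _
set_option linter.unusedSectionVars false
set_option linter.unusedVariables false

lemma torso_bound (G : MGraph V) (T : SimpleGraph ι) (X : ι → Set V) (w : ℕ)
    (hT : T.IsTree) (hfin : G.verts.Finite) (h3 : G.ThreeEdgeConnected) (hw : 2 ≤ w)
    (hdisj : Pairwise fun t t' => Disjoint (X t) (X t')) (hcover : (⋃ t, X t) = G.verts)
    (t₀ : ι)
    (htorso : ∀ H, IsThreeCenter (Sum.inl '' (X t₀)) (torso G T X t₀) H → H.verts.ncard ≤ w) :
    (X t₀).ncard + {s | T.Adj t₀ s ∧ ∃ t' v, v ∈ X t' ∧ ReachAvoid T t₀ s t'}.ncard ≤ w := by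
  classical
  set N := {s | T.Adj t₀ s ∧ ∃ t' v, v ∈ X t' ∧ ReachAvoid T t₀ s t'} with hN
  have hXfin : (X t₀).Finite := hfin.subset (hcover ▸ Set.subset_iUnion X t₀)
  by_cases hcase : ∀ s ∈ N, (G.verts \ edgeSide T X s t₀).Nonempty
  · -- every side leaves a vertex outside: the torso is terminal
    have hterm : ∀ H', ¬ CenterStep (Sum.inl '' X t₀) (torso G T X t₀) H' := by
      intro H' hstep
      have hx : ∃ x : V ⊕ ι, x ∉ Sum.inl '' X t₀ ∧ x ∈ (torso G T X t₀).verts ∧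
          (torso G T X t₀).degree x ≤ 2 := by
        rcases hstep with ⟨x, y, z, hxX, hxV, hyz, hxy, hxz, hfil, -⟩ |
          ⟨x, hxX, hxV, hdeg, -, -⟩
        · refine ⟨x, hxX, hxV, ?_⟩
          unfold MGraph.degree
          rw [hfil]
          simp
        · exact ⟨x, hxX, hxV, hdeg⟩
      obtain ⟨x, hxX, hxV, hdeg2⟩ := hx
      rcases hxV with hmem | hmem
      · exact hxX hmem
      · obtain ⟨s, hsN, rfl⟩ := hmem
        have := torso_degree_ge G T X w hT h3 hdisj hcover hsN.1 hsN.2 (hcase s hsN)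
        omega
    have hbound := htorso _ ⟨Relation.ReflTransGen.refl, hterm⟩
    have hcardeq : (torso G T X t₀).verts.ncard = (X t₀).ncard + N.ncard := by
      have hverts : (torso G T X t₀).verts = Sum.inl '' X t₀ ∪ Sum.inr '' N := rfl
      rw [hverts, Set.ncard_union_eq ?hd (hXfin.image _) ((Set.toFinite N).image _),
        Set.ncard_image_of_injective _ Sum.inl_injective,
        Set.ncard_image_of_injective _ Sum.inr_injective]
      case hd =>
        rw [Set.disjoint_left]
        rintro _ ⟨v, -, rfl⟩ ⟨s, -, h⟩
        exact Sum.inl_ne_inr h.symm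
    omega
  · push_neg at hcase
    obtain ⟨s₀, hs₀N, hempty⟩ := hcase
    have hsub : G.verts ⊆ edgeSide T X s₀ t₀ :=
      Set.diff_eq_empty.mp hempty
    have hX0 : X t₀ = ∅ := by
      rw [Set.eq_empty_iff_forall_notMem]
      intro v hv
      have hvV : v ∈ G.verts := by
        rw [← hcover]; exact Set.mem_iUnion.mpr ⟨t₀, hv⟩
      obtain ⟨Xt, ⟨t₁, rfl⟩, hmem⟩ := hsub hvV
      simp only [Set.mem_iUnion] at hmem
      obtain ⟨ht₁, hvX⟩ := hmem
      have hne : t₁ = t₀ := by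
        by_contra hne'
        exact Set.disjoint_left.mp (hdisj hne') hvX hv
      rw [hne, del_comm T s₀ t₀] at ht₁
      exact tree_bridge hT hs₀N.1 (SimpleGraph.Reachable.symm ht₁)
    have hNsub : N ⊆ {s₀} := by
      rintro s ⟨hadj, t', v, hvX, hra⟩
      have hvV : v ∈ G.verts := by
        rw [← hcover]; exact Set.mem_iUnion.mpr ⟨t', hvX⟩
      obtain ⟨Xt, ⟨t₂, rfl⟩, hmem⟩ := hsub hvV
      simp only [Set.mem_iUnion] at hmem
      obtain ⟨ht₂, hvX₂⟩ := hmem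
      have ht2eq : t₂ = t' := by
        by_contra hne'
        exact Set.disjoint_left.mp (hdisj hne') hvX₂ hvX
      subst ht2eq
      have hra₀ : ReachAvoid T t₀ s₀ t₂ := (reachAvoid_iff_side hT hs₀N.1 t₂).mpr ht₂
      exact reachAvoid_unique hT hadj hs₀N.1 hra hra₀
    have h1 : (X t₀).ncard = 0 := by rw [hX0]; exact Set.ncard_empty V
    have h2 : N.ncard ≤ 1 := by
      calc N.ncard ≤ ({s₀} : Set ι).ncard :=
            Set.ncard_le_ncard hNsub (Set.finite_singleton s₀)
      _ = 1 := Set.ncard_singleton s₀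
    omega
lemma side_in_otherside (T : SimpleGraph ι) (X : ι → Set V) (hT : T.IsTree)
    {t₀ s s' : ι} (hadj : T.Adj t₀ s) (hadj' : T.Adj t₀ s') (hne : s' ≠ s) :
    edgeSide T X s' t₀ ⊆ edgeSide T X t₀ s := by
  intro v hv
  obtain ⟨Xt, ⟨t₁, rfl⟩, hmem⟩ := hv
  simp only [Set.mem_iUnion] at hmem
  obtain ⟨ht₁, hvX⟩ := hmem
  have hra : ReachAvoid T t₀ s' t₁ := (reachAvoid_iff_side hT hadj' t₁).mpr ht₁
  obtain ⟨hs'c, ht₁c, hr⟩ := hra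
  obtain ⟨p, hp⟩ := induce_reach_to_walk hr
  have hpt₀ : t₀ ∉ p.support := fun h => (hp _ h) rfl
  have hreach : (T.deleteEdges {s(t₀, s)}).Reachable t₀ t₁ := by
    refine ⟨(SimpleGraph.Walk.cons hadj' p).toDeleteEdges _ ?_⟩
    intro e he hmem
    rw [Set.mem_singleton_iff] at hmem
    subst hmem
    rw [SimpleGraph.Walk.edges_cons, List.mem_cons] at he
    rcases he with he | he
    · rw [Sym2.eq_iff] at he
      rcases he with ⟨-, h⟩ | ⟨-, h2⟩
      · exact hne h.symm
      · exact hadj.ne h2.symm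
    · exact hpt₀ (p.fst_mem_support_of_mem_edges he)
  exact Set.mem_biUnion hreach hvX
end Torso
end StarAux
end
noncomputable section
open scoped Classical
open MGraph

set_option linter.unusedVariables false
set_option maxHeartbeats 1000000

theorem exists_constrained_star_decomposition {V : Type} (G : MGraph V)
    (hfin : G.verts.Finite) (h3 : G.ThreeEdgeConnected) (w : ℕ) (hw : 2 ≤ w)
    (S : Set V) (hSsub : S ⊆ G.verts) (hScard : w + 1 ≤ S.ncard)
    (hcut : Multiset.card (G.cut S (G.verts \ S)) ≤ 2 * w)
    (htcw : tcw G ≤ w) :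
    ∃ (ℓ : ℕ) (X : Option (Fin ℓ) → Set V), 1 ≤ ℓ ∧
      IsTCD (G.induce S) (starGraph ℓ) X ∧
      NonTrivial X ∧
      InWidthLE (G.induce S) (starGraph ℓ) X w ∧
      (X none).ncard + ℓ ≤ w ∧
      ∀ i : Fin ℓ, (∑ᶠ x ∈ G.boundary S ∩ X (some i), G.bWeight S x) ≤ w := by
  classical
  obtain ⟨ι, hι, T, X, ⟨hT, hdisj, hcover⟩, hadh, htorso⟩ :=
    StarAux.tcwLE_of_tcw_le G hfin htcw
  haveI : Fintype ι := Fintype.ofFinite ι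
  have hSfin : S.Finite := hfin.subset hSsub
  have hSne : S.Nonempty := by
    rw [← Set.ncard_pos hSfin]; omega
  have hbagfin : ∀ t, (X t).Finite := fun t => hfin.subset (hcover ▸ Set.subset_iUnion X t)
  have hbagsub : ∀ t, X t ⊆ G.verts := fun t => hcover ▸ Set.subset_iUnion X t
  have htot : (∑ᶠ v ∈ G.verts, G.gammaExt S v) ≤ 2 * w :=
    (StarAux.total_gamma_le G S G.verts hfin).trans hcut
  obtain ⟨t₀, hsink⟩ := StarAux.exists_sink G T X S w hT hfin hSsub hSne hdisj hcover htot
  have hsink' : ∀ s, T.Adj t₀ s →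
      G.sideWeight T X S t₀ s ≤ w ∧ (S ∩ edgeSide T X t₀ s).Nonempty := by
    intro s hadj
    have h := hsink s hadj
    unfold MGraph.ruleOrient at h
    push_neg at h
    exact ⟨h.1, h.2⟩
  set Sset : Set ι := {s | T.Adj t₀ s ∧ (S ∩ edgeSide T X s t₀).Nonempty} with hSset
  haveI : Fintype ↥Sset := Fintype.ofFinite _
  set ℓ : ℕ := Fintype.card ↥Sset with hl
  set eqv : Fin ℓ ≃ ↥Sset := (Fintype.equivFin ↥Sset).symm with heqv
  set Xstar : Option (Fin ℓ) → Set V := fun o =>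
    Option.rec (S ∩ X t₀) (fun i => S ∩ edgeSide T X ((eqv i) : ι) t₀) o with hXstar
  have hXnone : Xstar none = S ∩ X t₀ := rfl
  have hXsome : ∀ i, Xstar (some i) = S ∩ edgeSide T X ((eqv i) : ι) t₀ := fun i => rfl
  have hlcard : ℓ = Sset.ncard := by
    rw [hl, Set.ncard_eq_toFinset_card', Set.toFinset_card]
  have hside_not0 : ∀ s, T.Adj t₀ s → ∀ v ∈ edgeSide T X s t₀, v ∉ X t₀ := by
    intro s hadj v hv hv0
    obtain ⟨Xt, ⟨t₁, rfl⟩, hmem⟩ := hv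
    simp only [Set.mem_iUnion] at hmem
    obtain ⟨ht₁, hvX⟩ := hmem
    have hne : t₁ = t₀ := by
      by_contra hne'
      exact Set.disjoint_left.mp (hdisj hne') hvX hv0
    rw [hne, StarAux.del_comm T s t₀] at ht₁
    exact StarAux.tree_bridge hT hadj ht₁.symm
  have hside_disj : ∀ s, T.Adj t₀ s → ∀ s', T.Adj t₀ s' → s ≠ s' →
      ∀ v ∈ edgeSide T X s t₀, v ∉ edgeSide T X s' t₀ := by
    intro s hadj s' hadj' hne v hv hv'
    obtain ⟨Xt, ⟨t₁, rfl⟩, hmem⟩ := hv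
    simp only [Set.mem_iUnion] at hmem
    obtain ⟨ht₁, hvX⟩ := hmem
    obtain ⟨Xt', ⟨t₂, rfl⟩, hmem'⟩ := hv'
    simp only [Set.mem_iUnion] at hmem'
    obtain ⟨ht₂, hvX'⟩ := hmem'
    have heq : t₁ = t₂ := by
      by_contra hne'
      exact Set.disjoint_left.mp (hdisj hne') hvX hvX'
    subst heq
    exact hne (StarAux.reachAvoid_unique hT hadj hadj'
      ((StarAux.reachAvoid_iff_side hT hadj t₁).mpr ht₁)
      ((StarAux.reachAvoid_iff_side hT hadj' t₁).mpr ht₂))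
  have hpart : ∀ v ∈ S, v ∈ X t₀ ∨ ∃ s ∈ Sset, v ∈ edgeSide T X s t₀ := by
    intro v hvS
    have hvV : v ∈ G.verts := hSsub hvS
    rw [← hcover] at hvV
    obtain ⟨Xt, ⟨t', rfl⟩, hvX⟩ := hvV
    by_cases ht' : t' = t₀
    · subst ht'
      exact Or.inl hvX
    · obtain ⟨s, hadj, hreach⟩ := StarAux.exists_first_step hT ht'
      have hvSide : v ∈ edgeSide T X s t₀ := Set.mem_biUnion hreach hvX
      exact Or.inr ⟨s, ⟨hadj, v, hvS, hvSide⟩, hvSide⟩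
  have hT2 : (S ∩ X t₀).ncard + ℓ ≤ w := by
    have hNb := StarAux.torso_bound G T X w hT hfin h3 hw hdisj hcover t₀ (htorso t₀)
    have hSsetN : Sset ⊆ {s | T.Adj t₀ s ∧ ∃ t' v, v ∈ X t' ∧ ReachAvoid T t₀ s t'} := by
      rintro s ⟨hadj, v, hvS, hvSide⟩
      obtain ⟨Xt, ⟨t₁, rfl⟩, hmem⟩ := hvSide
      simp only [Set.mem_iUnion] at hmem
      obtain ⟨ht₁, hvX⟩ := hmem
      exact ⟨hadj, t₁, v, hvX, (StarAux.reachAvoid_iff_side hT hadj t₁).mpr ht₁⟩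
    have h1 : (S ∩ X t₀).ncard ≤ (X t₀).ncard :=
      Set.ncard_le_ncard Set.inter_subset_right (hbagfin t₀)
    have h2 : ℓ ≤ {s | T.Adj t₀ s ∧ ∃ t' v, v ∈ X t' ∧ ReachAvoid T t₀ s t'}.ncard := by
      rw [hlcard]
      exact Set.ncard_le_ncard hSsetN (Set.toFinite _)
    omega
  have hl1 : 1 ≤ ℓ := by
    by_contra h0
    push_neg at h0
    have hIE : IsEmpty ↥Sset := Fintype.card_eq_zero_iff.mp (by omega)
    have hsub : S ⊆ X t₀ := by
      intro v hv
      rcases hpart v hv with h | ⟨s, hs, -⟩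
      · exact h
      · exact (hIE.false ⟨s, hs⟩).elim
    have hSeq : S ∩ X t₀ = S := Set.inter_eq_left.mpr hsub
    rw [hSeq] at hT2
    omega
  have hTCD : IsTCD (G.induce S) (starGraph ℓ) Xstar := by
    refine ⟨StarAux.star_isTree, ?_, ?_⟩
    · intro a b hne
      match a, b with
      | none, none => exact absurd rfl hne
      | none, some i =>
        rw [Set.disjoint_left]
        rintro v ⟨hvS, hv0⟩ ⟨-, hvSide⟩
        exact hside_not0 _ (eqv i).2.1 v hvSide hv0
      | some i, none =>
        rw [Set.disjoint_left]
        rintro v ⟨hvS, hvSide⟩ ⟨-, hv0⟩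
        exact hside_not0 _ (eqv i).2.1 v hvSide hv0
      | some i, some j =>
        have hij : ((eqv i) : ι) ≠ ((eqv j) : ι) := by
          intro h
          exact hne (by rw [eqv.injective (Subtype.ext h)])
        rw [Set.disjoint_left]
        rintro v ⟨hvS, hvSide⟩ ⟨-, hvSide'⟩
        exact hside_disj _ (eqv i).2.1 _ (eqv j).2.1 hij v hvSide hvSide'
    · show (⋃ o, Xstar o) = G.verts ∩ S
      apply subset_antisymm
      · intro v hv
        rw [Set.mem_iUnion] at hv
        obtain ⟨o, ho⟩ := hv
        have hvS : v ∈ S := by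
          cases o with
          | none => exact ho.1
          | some i => exact ho.1
        exact ⟨hSsub hvS, hvS⟩
      · rintro v ⟨hvV, hvS⟩
        rw [Set.mem_iUnion]
        rcases hpart v hvS with h | ⟨s, hs, hvSide⟩
        · exact ⟨none, hvS, h⟩
        · refine ⟨some (eqv.symm ⟨s, hs⟩), hvS, ?_⟩
          show v ∈ edgeSide T X ((eqv (eqv.symm ⟨s, hs⟩)) : ι) t₀
          rw [Equiv.apply_symm_apply]
          exact hvSide
  have hleafne : ∀ i : Fin ℓ, (Xstar (some i)).Nonempty := fun i => (eqv i).2.2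
  have hNT : NonTrivial Xstar := by
    by_cases h2 : 2 ≤ ℓ
    · exact ⟨some ⟨0, by omega⟩, some ⟨1, by omega⟩, by simp [Fin.ext_iff],
        hleafne _, hleafne _⟩
    · have hone : ℓ = 1 := by omega
      have hzero : (0 : ℕ) < ℓ := by omega
      have hsing : ∀ s ∈ Sset, s = ((eqv ⟨0, hzero⟩ : ↥Sset) : ι) := by
        intro s hs
        have h1 : Fintype.card ↥Sset ≤ 1 := by omega
        have h2 := Fintype.card_le_one_iff.mp h1 ⟨s, hs⟩ (eqv ⟨0, hzero⟩)
        exact congrArg Subtype.val h2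
      have hadj₀ : T.Adj t₀ ((eqv ⟨0, hzero⟩ : ↥Sset) : ι) := (eqv ⟨0, hzero⟩).2.1
      obtain ⟨v, hvS, hvSide⟩ := (hsink' _ hadj₀).2
      have hv0 : v ∈ X t₀ := by
        rcases hpart v hvS with h | ⟨s', hs', hvSide'⟩
        · exact h
        · exfalso
          have hseq : s' = ((eqv ⟨0, hzero⟩ : ↥Sset) : ι) := hsing s' hs'
          subst hseq
          obtain ⟨Xt, ⟨t₁, rfl⟩, hmem⟩ := hvSide
          simp only [Set.mem_iUnion] at hmem
          obtain ⟨ht₁, hvX⟩ := hmem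
          obtain ⟨Xt', ⟨t₂, rfl⟩, hmem'⟩ := hvSide'
          simp only [Set.mem_iUnion] at hmem'
          obtain ⟨ht₂, hvX'⟩ := hmem'
          have heq : t₁ = t₂ := by
            by_contra hne'
            exact Set.disjoint_left.mp (hdisj hne') hvX hvX'
          subst heq
          rw [StarAux.del_comm T _ t₀] at ht₂
          exact StarAux.side_disjoint hT hadj₀ ht₁ ht₂
      exact ⟨none, some ⟨0, hzero⟩, by simp, ⟨v, hvS, hv0⟩, hleafne _⟩
  have hInW : InWidthLE (G.induce S) (starGraph ℓ) Xstar w := by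
    constructor
    · intro a b hab
      have hab' := StarAux.star_adj.mp hab
      have hclaim1 : ∀ i : Fin ℓ, edgeSide (starGraph ℓ) Xstar (some i) none ⊆
          edgeSide T X ((eqv i) : ι) t₀ := by
        intro i
        rw [StarAux.star_edgeSide_leaf]
        exact Set.inter_subset_right
      have hclaim2 : ∀ i : Fin ℓ, edgeSide (starGraph ℓ) Xstar none (some i) ⊆
          edgeSide T X t₀ ((eqv i) : ι) := by
        intro i v hv
        obtain ⟨Xt, ⟨t, rfl⟩, hmem⟩ := hv
        simp only [Set.mem_iUnion] at hmem
        obtain ⟨htreach, hvX⟩ := hmem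
        have htne : t ≠ some i := by
          rintro rfl
          exact StarAux.side_disjoint StarAux.star_isTree
            (StarAux.star_adj.mpr ⟨by simp, Or.inl rfl⟩) htreach
            (SimpleGraph.Reachable.refl _)
        match t, htne, hvX with
        | none, _, hvX =>
          exact Set.mem_biUnion (SimpleGraph.Reachable.refl _) hvX.2
        | some j, htne, hvX =>
          have hij : ((eqv j) : ι) ≠ ((eqv i) : ι) := by
            intro h
            exact htne (by rw [eqv.injective (Subtype.ext h)])
          exact StarAux.side_in_otherside T X hT (eqv i).2.1 (eqv j).2.1 hij hvX.2
      have hEle : (G.induce S).edges ≤ G.edges := Multiset.filter_le _ _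
      match a, b, hab with
      | none, none, hab => exact absurd rfl hab'.1
      | some i, some j, hab =>
        exfalso
        rcases hab'.2 with h' | h' <;> simp at h'
      | some i, none, hab =>
        exact le_trans (Multiset.card_le_card
          (StarAux.cut_mono hEle (hclaim1 i) (hclaim2 i))) (hadh _ t₀ (eqv i).2.1.symm)
      | none, some i, hab =>
        exact le_trans (Multiset.card_le_card
          (StarAux.cut_mono hEle (hclaim2 i) (hclaim1 i))) (hadh t₀ _ (eqv i).2.1)
    · intro t hnl H hH
      match t, hnl with
      | some i, hnl =>
        exfalso
        apply hnl
        refine ⟨none, StarAux.star_adj.mpr ⟨by simp, Or.inr rfl⟩, ?_⟩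
        intro y hy
        rcases (StarAux.star_adj.mp hy).2 with h | h
        · simp at h
        · exact h
      | none, hnl =>
        have hsub := StarAux.chain_verts_subset hH.1
        have hvertssub : (torso (G.induce S) (starGraph ℓ) Xstar none).verts ⊆
            Sum.inl '' (Xstar none) ∪
              Sum.inr '' (Set.range (some : Fin ℓ → Option (Fin ℓ))) := by
          intro x hx
          rcases hx with h | ⟨o, ho, rfl⟩
          · exact Or.inl h
          · refine Or.inr ⟨o, ?_, rfl⟩
            have hne := (StarAux.star_adj.mp ho.1).1
            cases o with
            | none => exact absurd rfl hne
            | some j => exact ⟨j, rfl⟩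
        have hfin1 : (Sum.inl '' (Xstar none) ∪
            Sum.inr '' (Set.range (some : Fin ℓ → Option (Fin ℓ)))).Finite :=
          ((hSfin.inter_of_left _).image _).union ((Set.toFinite _).image _)
        calc H.verts.ncard
            ≤ (Sum.inl '' (Xstar none) ∪
                Sum.inr '' (Set.range (some : Fin ℓ → Option (Fin ℓ)))).ncard :=
              Set.ncard_le_ncard (hsub.trans hvertssub) hfin1
        _ ≤ (Sum.inl '' (Xstar none)).ncard +
              (Sum.inr '' (Set.range (some : Fin ℓ → Option (Fin ℓ)))).ncard :=
              Set.ncard_union_le _ _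
        _ = (Xstar none).ncard + ℓ := by
              rw [Set.ncard_image_of_injective _ Sum.inl_injective,
                Set.ncard_image_of_injective _ Sum.inr_injective,
                ← Set.image_univ, Set.ncard_image_of_injective _ (Option.some_injective _),
                Set.ncard_univ, Nat.card_eq_fintype_card, Fintype.card_fin]
        _ ≤ w := hT2
  have hleafw : ∀ i : Fin ℓ,
      (∑ᶠ x ∈ G.boundary S ∩ Xstar (some i), G.bWeight S x) ≤ w := by
    intro i
    have hadj : T.Adj t₀ ((eqv i) : ι) := (eqv i).2.1
    have hsw := (hsink' _ hadj).1
    have hsidefin : (edgeSide T X ((eqv i) : ι) t₀).Finite :=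
      hfin.subset (Set.iUnion₂_subset fun t _ => hbagsub t)
    have hbw : ∀ x ∈ G.boundary S ∩ Xstar (some i), G.bWeight S x = G.gammaExt S x := by
      intro x hx
      have hxS : x ∈ S := hx.2.1
      simp [MGraph.gammaExt, hxS]
    have hseteq : {t | (T.deleteEdges {s(((eqv i) : ι), t₀)}).Reachable ((eqv i) : ι) t}
        = {t | (T.deleteEdges {s(t₀, ((eqv i) : ι))}).Reachable ((eqv i) : ι) t} := by
      rw [StarAux.del_comm T _ t₀]
    calc (∑ᶠ x ∈ G.boundary S ∩ Xstar (some i), G.bWeight S x)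
        = ∑ᶠ x ∈ G.boundary S ∩ Xstar (some i), G.gammaExt S x := finsum_mem_congr rfl hbw
    _ ≤ ∑ᶠ x ∈ edgeSide T X ((eqv i) : ι) t₀, G.gammaExt S x := by
        apply StarAux.finsum_mem_le_finsum_mem _ hsidefin
        exact fun x hx => hx.2.2
    _ = ∑ᶠ t ∈ {t | (T.deleteEdges {s(((eqv i) : ι), t₀)}).Reachable ((eqv i) : ι) t},
          ∑ᶠ v ∈ X t, G.gammaExt S v :=
        finsum_mem_biUnion (fun a _ b _ hab => hdisj hab) (Set.toFinite _)
          (fun t _ => hbagfin t)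
    _ = G.sideWeight T X S t₀ ((eqv i) : ι) := by
        rw [hseteq]
        rfl
    _ ≤ w := hsw
  exact ⟨ℓ, Xstar, hl1, hTCD, hNT, hInW, hT2, hleafw⟩

end
end
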